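/- arXiv:2110.01132 — 9 statements merged into one kernel-verified Lean document; each statement's English description precedes it below -/
import Mathlib

section
/- The Luroth map L : (0,1] → (0,1] defined by L(x) = N(x)·((N(x)+1)·x − 1), where N(x) = ⌊1/x⌋, preserves Lebesgue measure restricted to the interval (0,1]; that is, L is a measure-preserving transformation of ((0,1], Lebesgue measure). -/
open MeasureTheory

/-- The digit function `N(x) = ⌊1/x⌋` of the Luroth expansion. -/
noncomputable def lurothN (x : ℝ) : ℤ := ⌊1 / x⌋

/-- The Luroth map `L(x) = N(x)((N(x)+1)x - 1)`. -/
noncomputable def lurothL (x : ℝ) : ℝ :=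
  (lurothN x) * ((lurothN x + 1) * x - 1)

/-- The branch intervals of the Luroth map. -/
noncomputable def lurothI (n : ℕ) : Set ℝ := Set.Ioc (1 / (n + 2) : ℝ) (1 / (n + 1))

/-- The linear branch of the Luroth map. -/
noncomputable def lurothF (n : ℕ) (x : ℝ) : ℝ := ((n : ℝ) + 1) * ((n : ℝ) + 2) * x - (n + 1)

lemma lurothL_measurable : Measurable lurothL := by
  have hN : Measurable lurothN := (measurable_const.div measurable_id).floor
  have hNr : Measurable fun x => ((lurothN x : ℝ)) :=
    measurable_from_top.comp hN
  unfold lurothL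
  exact hNr.mul (((hNr.add measurable_const).mul measurable_id).sub measurable_const)

lemma mem_lurothI_iff {n : ℕ} {x : ℝ} :
    x ∈ lurothI n ↔ 0 < x ∧ ((n : ℝ) + 1) ≤ 1 / x ∧ 1 / x < (n : ℝ) + 2 := by
  have h1 : (0 : ℝ) < (n : ℝ) + 1 := by positivity
  have h2 : (0 : ℝ) < (n : ℝ) + 2 := by positivity
  constructor
  · rintro ⟨hlo, hhi⟩
    have hx : 0 < x := lt_trans (by positivity) hlo
    refine ⟨hx, ?_, ?_⟩
    · rw [le_div_iff₀ hx]; rw [le_div_iff₀ h1] at hhi; nlinarith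
    · rw [div_lt_iff₀ hx]; rw [div_lt_iff₀ h2] at hlo; nlinarith
  · rintro ⟨hx, hle, hlt⟩
    constructor
    · rw [div_lt_iff₀ h2]; rw [div_lt_iff₀ hx] at hlt; nlinarith
    · rw [le_div_iff₀ h1]; rw [le_div_iff₀ hx] at hle; nlinarith

lemma lurothN_eq {n : ℕ} {x : ℝ} (hx : x ∈ lurothI n) : lurothN x = (n : ℤ) + 1 := by
  obtain ⟨hx0, hle, hlt⟩ := mem_lurothI_iff.1 hx
  unfold lurothN
  rw [Int.floor_eq_iff]
  constructor
  · push_cast; exact hle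
  · push_cast; linarith

lemma lurothL_eq {n : ℕ} {x : ℝ} (hx : x ∈ lurothI n) : lurothL x = lurothF n x := by
  unfold lurothL lurothF
  rw [lurothN_eq hx]
  push_cast
  ring

lemma lurothF_preimage_Ioc (n : ℕ) : lurothF n ⁻¹' (Set.Ioc 0 1) = lurothI n := by
  ext x
  have h1 : (0 : ℝ) < (n : ℝ) + 1 := by positivity
  have h2 : (0 : ℝ) < (n : ℝ) + 2 := by positivity
  simp only [Set.mem_preimage, Set.mem_Ioc, lurothF, lurothI]
  constructor
  · rintro ⟨ha, hb⟩
    constructor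
    · rw [div_lt_iff₀ h2]
      nlinarith
    · rw [le_div_iff₀ h1]
      nlinarith
  · rintro ⟨ha, hb⟩
    rw [div_lt_iff₀ h2] at ha
    rw [le_div_iff₀ h1] at hb
    constructor
    · nlinarith
    · nlinarith

lemma lurothI_iUnion : (⋃ n, lurothI n) = Set.Ioc (0 : ℝ) 1 := by
  ext x
  simp only [Set.mem_iUnion, Set.mem_Ioc]
  constructor
  · rintro ⟨n, hx⟩
    obtain ⟨hx0, hle, _⟩ := mem_lurothI_iff.1 hx
    refine ⟨hx0, ?_⟩
    rw [le_div_iff₀ hx0] at hle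
    nlinarith [hle, (by positivity : (0:ℝ) ≤ (n:ℝ))]
  · rintro ⟨hx0, hx1⟩
    have h1x : (1 : ℝ) ≤ 1 / x := by rw [le_div_iff₀ hx0]; linarith
    set m : ℤ := ⌊1 / x⌋ with hm
    have hm1 : (1 : ℤ) ≤ m := by exact_mod_cast Int.le_floor.2 (by exact_mod_cast h1x)
    obtain ⟨n, hn⟩ : ∃ n : ℕ, m = (n : ℤ) + 1 := ⟨(m - 1).toNat, by omega⟩
    refine ⟨n, mem_lurothI_iff.2 ⟨hx0, ?_, ?_⟩⟩
    · have := Int.floor_le (1 / x)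
      rw [← hm, hn] at this
      exact_mod_cast this
    · have := Int.lt_floor_add_one (1 / x)
      rw [← hm, hn] at this
      push_cast at this
      linarith

lemma lurothI_disjoint : Pairwise (Function.onFun Disjoint lurothI) := by
  have key : ∀ m n : ℕ, m < n → Disjoint (lurothI m) (lurothI n) := by
    intro m n hmn
    apply Set.disjoint_of_subset (Set.Ioc_subset_Ioi_self) (Set.Ioc_subset_Iic_self)
    have hle : (1:ℝ) / ((n:ℝ) + 1) ≤ 1 / ((m:ℝ) + 2) := by
      apply one_div_le_one_div_of_le (by positivity)
      have : (m : ℝ) + 1 ≤ (n : ℝ) := by exact_mod_cast hmn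
      linarith
    exact (Set.Iic_disjoint_Ioi hle).symm
  intro m n hmn
  rcases lt_or_gt_of_ne hmn with h | h
  · exact key m n h
  · exact (key n m h).symm

lemma lurothF_volume_preimage (n : ℕ) (t : Set ℝ) :
    volume (lurothF n ⁻¹' t)
      = ENNReal.ofReal (1 / (((n : ℝ) + 1) * ((n : ℝ) + 2))) * volume t := by
  have hc : (((n : ℝ) + 1) * ((n : ℝ) + 2)) ≠ 0 := by positivity
  have : lurothF n ⁻¹' t
      = (fun x => (((n : ℝ) + 1) * ((n : ℝ) + 2)) * x) ⁻¹' ((fun y => y + (-((n : ℝ) + 1))) ⁻¹' t) := by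
    ext x; simp [lurothF, sub_eq_add_neg]
  rw [this, Real.volume_preimage_mul_left hc, measure_preimage_add_right]
  congr 1
  rw [abs_of_pos (by positivity)]
  rw [one_div]

lemma luroth_tsum : (∑' n : ℕ, ENNReal.ofReal (1 / (((n : ℝ) + 1) * ((n : ℝ) + 2)))) = 1 := by
  have hpart : ∀ N : ℕ, ∑ i ∈ Finset.range N, (1 / (((i : ℝ) + 1) * ((i : ℝ) + 2)))
      = 1 - 1 / (N + 1) := by
    intro N
    induction N with
    | zero => simp
    | succ N ih =>
      rw [Finset.sum_range_succ, ih]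
      have h1 : ((N : ℝ) + 1) ≠ 0 := by positivity
      have h2 : ((N : ℝ) + 2) ≠ 0 := by positivity
      push_cast
      field_simp
      ring
  have hsum : HasSum (fun n : ℕ => ENNReal.ofReal (1 / (((n : ℝ) + 1) * ((n : ℝ) + 2)))) 1 := by
    rw [ENNReal.hasSum_iff_tendsto_nat]
    have : ∀ N : ℕ, ∑ i ∈ Finset.range N, ENNReal.ofReal (1 / (((i : ℝ) + 1) * ((i : ℝ) + 2)))
        = ENNReal.ofReal (1 - 1 / (N + 1)) := by
      intro N
      rw [← ENNReal.ofReal_sum_of_nonneg (fun i _ => by positivity), hpart]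
    simp_rw [this]
    have : Filter.Tendsto (fun N : ℕ => (1 : ℝ) - 1 / (N + 1)) Filter.atTop (nhds 1) := by
      have : Filter.Tendsto (fun n : ℕ => 1 / ((n : ℝ) + 1)) Filter.atTop (nhds 0) := tendsto_one_div_add_atTop_nhds_zero_nat
      have h := Filter.Tendsto.const_sub (1 : ℝ) this
      simpa using h
    have hcont := (ENNReal.continuous_ofReal.tendsto (1 : ℝ)).comp this
    simpa [Function.comp_def] using hcont
  exact hsum.tsum_eq

/-- The Luroth map preserves Lebesgue measure restricted to `(0, 1]`. -/
theorem lurothL_measurePreserving :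
    MeasurePreserving lurothL
      (volume.restrict (Set.Ioc (0 : ℝ) 1))
      (volume.restrict (Set.Ioc (0 : ℝ) 1)) := by
  refine ⟨lurothL_measurable, ?_⟩
  ext s hs
  rw [Measure.map_apply lurothL_measurable hs, Measure.restrict_apply hs,
    Measure.restrict_apply (lurothL_measurable hs)]
  set t := s ∩ Set.Ioc (0 : ℝ) 1 with ht
  have hkey : lurothL ⁻¹' s ∩ Set.Ioc (0 : ℝ) 1 = ⋃ n, lurothF n ⁻¹' t := by
    rw [← lurothI_iUnion, Set.inter_iUnion]
    apply Set.iUnion_congr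
    intro n
    ext x
    constructor
    · rintro ⟨hxs, hxI⟩
      have hmem : lurothF n x ∈ Set.Ioc (0:ℝ) 1 := by
        rw [← lurothF_preimage_Ioc] at hxI; exact hxI
      exact ⟨by rw [← lurothL_eq hxI]; exact hxs, hmem⟩
    · rintro ⟨hxs, hxIoc⟩
      have hxI : x ∈ lurothI n := by
        rw [← lurothF_preimage_Ioc]; exact hxIoc
      exact ⟨by rw [Set.mem_preimage, lurothL_eq hxI]; exact hxs, hxI⟩
  rw [hkey]
  have hFm : ∀ n : ℕ, Measurable (lurothF n) := by
    intro n
    exact (measurable_const.mul measurable_id).sub measurable_const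
  have htm : MeasurableSet t := hs.inter measurableSet_Ioc
  have hdisj : Pairwise (Function.onFun Disjoint fun n => lurothF n ⁻¹' t) := by
    intro m n hmn
    show Disjoint (lurothF m ⁻¹' t) (lurothF n ⁻¹' t)
    refine Set.disjoint_of_subset ?_ ?_ (lurothI_disjoint hmn)
    · intro x hx
      rw [← lurothF_preimage_Ioc m]
      exact (Set.mem_preimage.1 hx).2
    · intro x hx
      rw [← lurothF_preimage_Ioc n]
      exact (Set.mem_preimage.1 hx).2
  rw [measure_iUnion hdisj (fun n => (hFm n) htm)]
  simp_rw [lurothF_volume_preimage]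
  rw [ENNReal.tsum_mul_right, luroth_tsum, one_mul]
end

section
/- For all integers k ≥ 1 and m ≥ 1, the rational function Q_k(m) = (m−1)^{k−1} / (m^k (m+1)) admits the partial fraction expansion Q_k(m) = 2^{k−1} (1/m − 1/(m+1)) + Σ_{j=2}^{k} T(k−1, k−j) (−1)^{j+1} / m^j, where T(l, j) = Σ_{i=0}^{j} C(l, i) is the partial sum of binomial coefficients (Bernoulli triangle). -/
/-- The entries of Bernoulli's triangle: partial sums of binomial coefficients,
`T(l, j) = ∑_{i=0}^{j} C(l, i)`. -/
def bernoulliTriangle (l j : ℕ) : ℕ := ∑ i ∈ Finset.range (j + 1), Nat.choose l i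

lemma neg_one_pow_sub' {n i : ℕ} (h : i ≤ n) : ((-1:ℝ))^(n-i) = (-1)^n * (-1)^i := by
  have : (-1:ℝ)^n * (-1)^i = (-1)^(n-i) * ((-1)^2)^i := by
    rw [← pow_mul, ← pow_add, ← pow_add]
    congr 1
    omega
  simpa using this.symm

lemma bt_succ (n i : ℕ) : (bernoulliTriangle n (i+1) : ℝ)
    = bernoulliTriangle n i + Nat.choose n (i+1) := by
  unfold bernoulliTriangle
  rw [Finset.sum_range_succ]
  push_cast
  ring

lemma bt_top (n : ℕ) (hn : 1 ≤ n) : (bernoulliTriangle n (n-1) : ℝ) = 2^n - 1 := by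
  unfold bernoulliTriangle
  have h1 : n - 1 + 1 = n := by omega
  have h2 : ∑ i ∈ Finset.range (n+1), Nat.choose n i = 2^n := Nat.sum_range_choose n
  rw [Finset.sum_range_succ, Nat.choose_self] at h2
  rw [h1]
  have : ∑ i ∈ Finset.range n, Nat.choose n i = 2^n - 1 := by omega
  rw [this]
  have : (1:ℕ) ≤ 2^n := Nat.one_le_two_pow
  push_cast [this]
  ring

lemma key (n : ℕ) (x : ℝ) :
    (x - 1)^n = 2^n * x^n + ∑ i ∈ Finset.range n,
      (-1:ℝ)^(n-i) * (bernoulliTriangle n i : ℝ) * (x^(i+1) + x^i) := by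
  rcases Nat.eq_zero_or_pos n with h0 | hn
  · subst h0; simp
  set p : ℕ → ℝ := fun i =>
    if i = 0 then 0 else (-1:ℝ)^(n-(i-1)) * (bernoulliTriangle n (i-1) : ℝ) * x^i with hp
  have hterm : ∀ i ∈ Finset.range n,
      (-1:ℝ)^(n-i) * (bernoulliTriangle n i : ℝ) * (x^(i+1) + x^i)
        = (-1:ℝ)^(n-i) * (Nat.choose n i : ℝ) * x^i + (p (i+1) - p i) := by
    intro i hi
    have hi' : i < n := Finset.mem_range.mp hi
    match i with
    | 0 =>
      simp [hp, bernoulliTriangle]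
      ring
    | (Nat.succ j) =>
      have h1 : j + 1 ≠ 0 := by omega
      have h2 : j + 1 + 1 ≠ 0 := by omega
      simp only [hp, if_neg h1, if_neg h2, Nat.add_sub_cancel]
      rw [bt_succ n j]
      have e1 : (-1:ℝ)^(n-(j+1)) = (-1)^n * (-1)^(j+1) := neg_one_pow_sub' (by omega)
      have e2 : (-1:ℝ)^(n-j) = (-1)^n * (-1)^j := neg_one_pow_sub' (by omega)
      simp only [Nat.succ_sub_one]
      rw [e1, e2]
      ring
  rw [Finset.sum_congr rfl hterm, Finset.sum_add_distrib, Finset.sum_range_sub p n]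
  have hp0 : p 0 = 0 := by simp [hp]
  have hpn : p n = -((2:ℝ)^n - 1) * x^n := by
    have h1 : n ≠ 0 := by omega
    have h2 : n - (n-1) = 1 := by omega
    simp only [hp, if_neg h1, h2, bt_top n hn]
    ring
  have hbin : ∑ i ∈ Finset.range n, (-1:ℝ)^(n-i) * (Nat.choose n i : ℝ) * x^i
      = (x-1)^n - x^n := by
    have := add_pow x (-1:ℝ) n
    rw [Finset.sum_range_succ] at this
    simp only [Nat.sub_self, pow_zero, Nat.choose_self, Nat.cast_one, mul_one] at this
    have h : (x + -1)^n = (x-1)^n := by ring_nf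
    rw [h] at this
    have : ∑ i ∈ Finset.range n, x ^ i * (-1:ℝ) ^ (n - i) * ↑(n.choose i) = (x-1)^n - x^n := by
      linarith [this]
    rw [← this]
    apply Finset.sum_congr rfl
    intro i _
    ring
  rw [hbin, hp0, hpn]
  ring

/-- Partial fraction expansion of `Q_k(m) = (m-1)^{k-1} / (m^k (m+1))`:
`Q_k(m) = 2^{k-1}(1/m - 1/(m+1)) + ∑_{j=2}^{k} T(k-1, k-j) (-1)^{j+1} / m^j`. -/
theorem Qk_partial_fraction (k m : ℕ) (hk : 1 ≤ k) (hm : 1 ≤ m) :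
    ((m : ℝ) - 1) ^ (k - 1) / ((m : ℝ) ^ k * ((m : ℝ) + 1))
      = 2 ^ (k - 1) * (1 / (m : ℝ) - 1 / ((m : ℝ) + 1))
        + ∑ j ∈ Finset.Icc 2 k,
            (bernoulliTriangle (k - 1) (k - j) : ℝ) * (-1) ^ (j + 1) / (m : ℝ) ^ j := by
  obtain ⟨n, rfl⟩ : ∃ n, k = n + 1 := ⟨k - 1, by omega⟩
  simp only [Nat.add_sub_cancel]
  set x : ℝ := (m : ℝ) with hxdef
  have hx : x ≠ 0 := by
    have : (1:ℝ) ≤ x := by rw [hxdef]; exact_mod_cast hm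
    linarith
  have hx1 : x + 1 ≠ 0 := by
    have : (1:ℝ) ≤ x := by rw [hxdef]; exact_mod_cast hm
    linarith
  have hD : x ^ (n+1) * (x + 1) ≠ 0 := mul_ne_zero (pow_ne_zero _ hx) hx1
  have h2n : (2:ℝ)^n * (1/x - 1/(x+1)) = 2^n * x^n / (x^(n+1) * (x+1)) := by
    field_simp
    ring
  have hsum : ∑ j ∈ Finset.Icc 2 (n+1),
      (bernoulliTriangle n (n + 1 - j) : ℝ) * (-1) ^ (j + 1) / x ^ j
      = ∑ i ∈ Finset.range n,
        (-1:ℝ)^(n-i) * (bernoulliTriangle n i : ℝ) * (x^(i+1) + x^i) / (x^(n+1) * (x+1)) := by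
    apply Finset.sum_nbij' (fun a => n + 1 - a) (fun i => n + 1 - i)
    · intro a ha
      simp only [Finset.mem_Icc] at ha
      simp only [Finset.mem_range]
      omega
    · intro i hi
      simp only [Finset.mem_range] at hi
      simp only [Finset.mem_Icc]
      omega
    · intro a ha
      simp only [Finset.mem_Icc] at ha
      omega
    · intro i hi
      simp only [Finset.mem_range] at hi
      omega
    · intro a ha
      simp only [Finset.mem_Icc] at ha
      have h1 : n - (n + 1 - a) = a - 1 := by omega
      have h2 : (-1:ℝ)^(a+1) = (-1)^(a-1) := by
        have e : a + 1 = (a - 1) + 2 := by omega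
        rw [e, pow_add]
        simp
      have hxp : x^(n+1) = x^(n+1-a) * x^a := by
        rw [← pow_add]
        congr 1
        omega
      rw [h1, h2, div_eq_div_iff (pow_ne_zero _ hx) hD, hxp]
      ring
  rw [key n x, hsum, h2n, add_div, Finset.sum_div]
end

section
/- For every integer k ≥ 1, Σ_{m=1}^{∞} (m−1)^{k−1} / (m^k (m+1)) = 2^{k−1} + Σ_{j=2}^{k} T(k−1, k−j) ζ(j) (−1)^{j+1}, where ζ is the Riemann zeta function and T(l, j) = Σ_{i=0}^{j} C(l, i). -/
lemma bT_pascal (n s : ℕ) :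
    bernoulliTriangle (n+1) (s+1) = bernoulliTriangle n (s+1) + bernoulliTriangle n s := by
  unfold bernoulliTriangle
  rw [Finset.sum_range_succ' (fun i => Nat.choose (n+1) i) (s+1),
      Finset.sum_range_succ' (fun i => Nat.choose n i) (s+1)]
  simp only [Nat.choose_succ_succ, Nat.succ_eq_add_one, Nat.choose_zero_right, Finset.sum_add_distrib]
  omega

lemma bT_diag (n : ℕ) : bernoulliTriangle n n = 2 ^ n := by
  simpa [bernoulliTriangle] using Nat.sum_range_choose n

lemma bT_top (n : ℕ) : bernoulliTriangle n (n+1) = 2 ^ n := by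
  unfold bernoulliTriangle
  rw [Finset.sum_range_succ, Nat.choose_succ_self]
  simpa [bernoulliTriangle] using Nat.sum_range_choose n

noncomputable def U (n : ℕ) (x : ℂ) : ℂ :=
  ∑ s ∈ Finset.range (n+1), (-1)^s * (bernoulliTriangle n s : ℂ) * x^s

lemma U_succ (n : ℕ) (x : ℂ) :
    U (n+1) x = (1 - x) * U n x + (-1)^(n+1) * 2^n * x^(n+1) := by
  have key : ∀ s, ((-1:ℂ))^(s+1) * (bernoulliTriangle (n+1) (s+1) : ℂ) * x^(s+1)
      = (-1)^(s+1) * (bernoulliTriangle n (s+1) : ℂ) * x^(s+1)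
        + (-x) * ((-1)^s * (bernoulliTriangle n s : ℂ) * x^s) := by
    intro s
    rw [bT_pascal]
    push_cast
    ring
  have h3 : ∑ s ∈ Finset.range (n+1), (-1:ℂ)^(s+1) * (bernoulliTriangle n (s+1) : ℂ) * x^(s+1)
      = U n x + (-1)^(n+1) * 2^n * x^(n+1) - 1 := by
    have h := Finset.sum_range_succ' (fun s => (-1:ℂ)^s * (bernoulliTriangle n s : ℂ) * x^s) (n+1)
    rw [Finset.sum_range_succ (fun s => (-1:ℂ)^s * (bernoulliTriangle n s : ℂ) * x^s) (n+1),
        bT_top] at h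
    unfold U
    simp only [pow_zero, Nat.cast_ofNat, mul_one, bernoulliTriangle, Finset.sum_range_one, Finset.range_one,
      Finset.sum_singleton, Nat.choose_zero_right, Nat.cast_one, one_mul] at h ⊢
    push_cast at h ⊢
    simp only [Finset.sum_range_one, Nat.choose_zero_right, Nat.cast_one] at h ⊢
    linear_combination -h
  unfold U
  rw [Finset.sum_range_succ' (fun s => (-1:ℂ)^s * (bernoulliTriangle (n+1) s : ℂ) * x^s) (n+1)]
  simp only [key]
  rw [Finset.sum_add_distrib, ← Finset.mul_sum]
  rw [show (∑ s ∈ Finset.range (n+1), (-1:ℂ)^(s+1) * (bernoulliTriangle n (s+1) : ℂ) * x^(s+1)) = _ from h3]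
  unfold U
  simp [bernoulliTriangle]
  ring

lemma U_key (n : ℕ) (x : ℂ) :
    (x + 1) * U n x = (-1)^n * ((x - 1)^n + 2^n * x^(n+1)) := by
  induction n with
  | zero => simp [U, bernoulliTriangle]; ring
  | succ n ih =>
    rw [U_succ]
    linear_combination (1 - x) * ih

lemma U_key' (n : ℕ) (x : ℂ) :
    (x + 1) * ((-1)^n * U n x) = (x - 1)^n + 2^n * x^(n+1) := by
  have h := U_key n x
  have hsq : ((-1:ℂ))^n * (-1)^n = 1 := by rw [← mul_pow]; norm_num
  linear_combination (-1:ℂ)^n * h + ((x-1)^n + 2^n * x^(n+1)) * hsq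

lemma hUdiv (n : ℕ) (x : ℂ) (hx : x ≠ 0) :
    (-1:ℂ)^n * U n x / x^(n+1)
      = 2^n / x + ∑ s ∈ Finset.range n,
          ((-1:ℂ)^n * (-1)^s * (bernoulliTriangle n s : ℂ)) * (1 / x^(n+1-s)) := by
  rw [U, Finset.sum_range_succ, bT_diag, mul_add, add_div, add_comm]
  congr 1
  · have hsq : ((-1:ℂ))^n * (-1)^n = 1 := by rw [← mul_pow]; norm_num
    rw [pow_succ]
    push_cast
    field_simp
    linear_combination hsq
  · rw [Finset.mul_sum, Finset.sum_div]
    refine Finset.sum_congr rfl fun s hs => ?_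
    rw [Finset.mem_range] at hs
    have hp : x^(n+1-s) * x^s = x^(n+1) := by
      rw [← pow_add]; congr 1; omega
    rw [mul_one_div, div_eq_div_iff (pow_ne_zero _ hx) (pow_ne_zero _ hx)]
    rw [← hp]
    ring

lemma per_term (n : ℕ) (x : ℂ) (hx : x ≠ 0) (hx1 : x + 1 ≠ 0) :
    (x - 1)^n / (x^(n+1) * (x + 1))
      = 2^n * (1 / (x * (x + 1)))
        + ∑ s ∈ Finset.range n,
            ((-1:ℂ)^n * (-1)^s * (bernoulliTriangle n s : ℂ)) * (1 / x^(n+1-s)) := by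
  have key := U_key' n x
  have h1 : (x - 1)^n / (x^(n+1) * (x + 1))
      = (-1:ℂ)^n * U n x / x^(n+1) - 2^n / (x + 1) := by
    rw [div_sub_div _ _ (pow_ne_zero _ hx) hx1, div_eq_div_iff (by
      exact mul_ne_zero (pow_ne_zero _ hx) hx1) (mul_ne_zero (pow_ne_zero _ hx) hx1)]
    linear_combination (-(x^(n+1) * (x+1))) * key
  rw [h1, hUdiv n x hx]
  have h2 : (2:ℂ)^n / x - 2^n / (x+1) = 2^n * (1 / (x * (x+1))) := by
    field_simp
    ring
  ring_nf
  ring_nf at h2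
  linear_combination h2

lemma summable_nat_complex_pow (j : ℕ) (hj : 2 ≤ j) :
    Summable (fun n : ℕ => 1 / (n:ℂ)^j) := by
  have h : Summable (fun n : ℕ => 1 / (n:ℝ)^j) :=
    Real.summable_one_div_nat_pow.mpr (by omega)
  refine Summable.of_norm ?_
  refine h.congr fun n => ?_
  simp [norm_div, norm_pow]

lemma summable_pnat_pow (j : ℕ) (hj : 2 ≤ j) :
    Summable (fun m : ℕ+ => 1 / (m:ℂ)^j) := by
  have := (summable_nat_complex_pow j hj).comp_injective (PNat.coe_injective)
  exact this.congr fun m => rfl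

lemma pnat_cast_symm (n : ℕ) : ((Equiv.pnatEquivNat.symm n : ℕ+) : ℂ) = (n:ℂ) + 1 := by
  simp [Equiv.pnatEquivNat, Nat.succPNat]

lemma zeta_pnat (j : ℕ) (hj : 2 ≤ j) :
    ∑' m : ℕ+, 1 / (m:ℂ)^j = riemannZeta j := by
  rw [zeta_nat_eq_tsum_of_gt_one (by omega : 1 < j)]
  rw [Summable.tsum_eq_zero_add (summable_nat_complex_pow j hj)]
  rw [show (1:ℂ) / (0:ℕ)^j = 0 by simp [zero_pow (by omega : j ≠ 0)]]
  rw [zero_add]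
  rw [← Equiv.tsum_eq (Equiv.pnatEquivNat.symm) (fun m : ℕ+ => 1 / (m:ℂ)^j)]
  refine tsum_congr fun n => ?_
  rw [pnat_cast_symm]
  push_cast
  ring_nf

lemma hasSum_telescope :
    HasSum (fun m : ℕ+ => 1 / ((m:ℂ) * ((m:ℂ) + 1))) 1 := by
  rw [← Equiv.hasSum_iff (Equiv.pnatEquivNat.symm)]
  have hfe : ((fun m : ℕ+ => 1 / ((m:ℂ) * ((m:ℂ) + 1))) ∘ (Equiv.pnatEquivNat.symm))
      = fun n : ℕ => 1 / (((n:ℂ) + 1) * ((n:ℂ) + 2)) := by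
    funext n
    simp only [Function.comp_apply, pnat_cast_symm]
    ring_nf
  rw [hfe]
  have hne1 : ∀ n : ℕ, ((n:ℂ) + 1) ≠ 0 := fun n => Nat.cast_add_one_ne_zero n
  have hne2 : ∀ n : ℕ, ((n:ℂ) + 2) ≠ 0 := by
    intro n
    have h := Nat.cast_add_one_ne_zero (R := ℂ) (n + 1)
    push_cast at h
    intro hc
    exact h (by linear_combination hc)
  have hsummable : Summable (fun n : ℕ => 1 / (((n:ℂ) + 1) * ((n:ℂ) + 2))) := by
    refine Summable.of_norm ?_
    have hbase : Summable (fun n : ℕ => 1 / ((n:ℝ) + 1)^2) := by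
      have := (Real.summable_one_div_nat_pow (p := 2)).mpr (by norm_num)
      have h2 := this.comp_injective (add_left_injective 1)
      refine h2.congr fun n => ?_
      simp [Function.comp]
    refine Summable.of_nonneg_of_le (fun n => norm_nonneg _) (fun n => ?_) hbase
    have e1 : ‖1 / (((n:ℂ) + 1) * ((n:ℂ) + 2))‖ = 1 / (((n:ℝ) + 1) * ((n:ℝ) + 2)) := by
      rw [norm_div, norm_one, norm_mul]
      congr 1
      have a1 : ((n:ℂ) + 1) = ((n+1 : ℕ) : ℂ) := by push_cast; ring
      have a2 : ((n:ℂ) + 2) = ((n+2 : ℕ) : ℂ) := by push_cast; ring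
      rw [a1, a2, Complex.norm_natCast, Complex.norm_natCast]
      push_cast
      ring
    rw [e1]
    have hp1 : (0:ℝ) < (n:ℝ) + 1 := by positivity
    have hp2 : (0:ℝ) < (n:ℝ) + 2 := by positivity
    rw [div_le_div_iff₀ (by positivity) (by positivity)]
    nlinarith
  rw [hsummable.hasSum_iff_tendsto_nat]
  have hps : ∀ N : ℕ, ∑ n ∈ Finset.range N, 1 / (((n:ℂ) + 1) * ((n:ℂ) + 2))
      = 1 - 1 / ((N:ℂ) + 1) := by
    intro N
    have htel := Finset.sum_range_sub' (f := fun i : ℕ => 1 / ((i:ℂ) + 1)) N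
    have h2 : ∑ n ∈ Finset.range N, 1 / (((n:ℂ) + 1) * ((n:ℂ) + 2))
        = ∑ i ∈ Finset.range N, (1 / ((i:ℂ) + 1) - 1 / (((i + 1 : ℕ):ℂ) + 1)) := by
      refine Finset.sum_congr rfl fun i _ => ?_
      have e2 : ((i + 1 : ℕ):ℂ) + 1 = (i:ℂ) + 2 := by push_cast; ring
      rw [e2, div_sub_div _ _ (hne1 i) (hne2 i)]
      congr 1
      ring
    rw [h2, htel]
    norm_num
  simp only [hps]
  have h0 : Filter.Tendsto (fun N : ℕ => 1 / ((N:ℂ) + 1)) Filter.atTop (nhds 0) := by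
    have hr : Filter.Tendsto (fun N : ℕ => 1 / ((N:ℝ) + 1)) Filter.atTop (nhds 0) :=
      tendsto_one_div_add_atTop_nhds_zero_nat
    have := (Complex.continuous_ofReal.tendsto 0).comp hr
    refine this.congr fun n => ?_
    simp [Function.comp]
  have := Filter.Tendsto.sub (tendsto_const_nhds (x := (1:ℂ))) h0
  simpa using this

/-- For `k ≥ 1`,
`∑_{m=1}^∞ (m-1)^{k-1} / (m^k (m+1)) = 2^{k-1} + ∑_{j=2}^{k} T(k-1, k-j) ζ(j) (-1)^{j+1}`,
where `ζ` is the Riemann zeta function. -/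
theorem sum_Qk_eq_zeta_combination (k : ℕ) (hk : 1 ≤ k) :
    ∑' m : ℕ+, (((m : ℂ) - 1) ^ (k - 1) / ((m : ℂ) ^ k * ((m : ℂ) + 1)))
      = 2 ^ (k - 1)
        + ∑ j ∈ Finset.Icc 2 k,
            (bernoulliTriangle (k - 1) (k - j) : ℂ) * riemannZeta j * (-1) ^ (j + 1) := by
  obtain ⟨n, rfl⟩ : ∃ n, k = n + 1 := ⟨k - 1, by omega⟩
  simp only [Nat.add_sub_cancel]
  have hx : ∀ m : ℕ+, ((m:ℂ)) ≠ 0 := by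
    intro m
    exact_mod_cast m.ne_zero
  have hx1 : ∀ m : ℕ+, ((m:ℂ)) + 1 ≠ 0 := fun m => Nat.cast_add_one_ne_zero (m : ℕ)
  rw [tsum_congr (fun m : ℕ+ => per_term n ((m:ℕ):ℂ) (hx m) (hx1 m))]
  have hsum2 : ∀ s ∈ Finset.range n, Summable (fun m : ℕ+ =>
      ((-1:ℂ)^n * (-1)^s * (bernoulliTriangle n s : ℂ)) * (1 / (m:ℂ)^(n+1-s))) := by
    intro s hs
    rw [Finset.mem_range] at hs
    exact (summable_pnat_pow (n+1-s) (by omega)).mul_left _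
  have hsum1 : Summable (fun m : ℕ+ => (2:ℂ)^n * (1 / ((m:ℂ) * ((m:ℂ)+1)))) :=
    hasSum_telescope.summable.mul_left _
  rw [Summable.tsum_add hsum1 (summable_sum hsum2)]
  rw [tsum_mul_left, hasSum_telescope.tsum_eq, mul_one]
  rw [Summable.tsum_finsetSum hsum2]
  congr 1
  have hterm : ∀ s ∈ Finset.range n,
      (∑' m : ℕ+, ((-1:ℂ)^n * (-1)^s * (bernoulliTriangle n s : ℂ)) * (1 / (m:ℂ)^(n+1-s)))
      = ((-1:ℂ)^n * (-1)^s * (bernoulliTriangle n s : ℂ)) * riemannZeta ((n+1-s : ℕ) : ℂ) := by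
    intro s hs
    rw [Finset.mem_range] at hs
    rw [tsum_mul_left, zeta_pnat _ (by omega)]
  rw [Finset.sum_congr rfl hterm]
  refine Finset.sum_nbij' (i := fun s => n + 1 - s) (j := fun j => n + 1 - j)
    ?_ ?_ ?_ ?_ ?_
  · intro s hs
    rw [Finset.mem_range] at hs
    rw [Finset.mem_Icc]
    omega
  · intro j hj
    rw [Finset.mem_Icc] at hj
    rw [Finset.mem_range]
    omega
  · intro s hs
    rw [Finset.mem_range] at hs
    omega
  · intro j hj
    rw [Finset.mem_Icc] at hj
    omega
  · intro s hs
    rw [Finset.mem_range] at hs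
    have e1 : n + 1 - (n + 1 - s) = s := by omega
    rw [e1]
    have hsign : ((-1:ℂ))^(n + 1 - s + 1) = (-1)^n * (-1)^s := by
      have hs2 : ((-1:ℂ))^s * (-1)^s = 1 := by rw [← mul_pow]; norm_num
      have hadd : (n + 1 - s + 1) + s = n + 2 := by omega
      calc ((-1:ℂ))^(n + 1 - s + 1) = (-1)^(n+1-s+1) * ((-1)^s * (-1)^s) := by
            rw [hs2, mul_one]
        _ = (-1)^((n+1-s+1)+s) * (-1)^s := by rw [pow_add]; ring
        _ = (-1)^(n+2) * (-1)^s := by rw [hadd]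
        _ = (-1)^n * (-1)^s := by rw [pow_succ, pow_succ]; ring
    rw [hsign]
    ring
end

section
/- Let X_1, X_2, … be an IID sequence of random variables with the Luroth distribution, M_k = max(X_1, …, X_k), and let ρ_k be the probability that there exists exactly one index 1 ≤ i ≤ k with X_i = M_k. Then for every k ≥ 1, ρ_k = k (2^{k−1} + Σ_{j=2}^{k} T(k−1, k−j) ζ(j) (−1)^{j+1}), where ζ is the Riemann zeta function and T(l, j) = Σ_{i=0}^{j} C(l, i). -/
open MeasureTheory ProbabilityTheory
open scoped ENNReal
open Finset

lemma bt_succ_s6 (l m : ℕ) : bernoulliTriangle l (m+1) = bernoulliTriangle l m + l.choose (m+1) :=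
  Finset.sum_range_succ _ _

lemma bt_self (l : ℕ) : bernoulliTriangle l l = 2^l := Nat.sum_range_choose l

lemma bt_zero (l : ℕ) : bernoulliTriangle l 0 = 1 := by simp [bernoulliTriangle]

lemma aux_tele : HasSum (fun n : ℕ => (1 : ℝ) / ((n+1)*(n+2))) 1 := by
  have h : ∀ N : ℕ, ∑ n ∈ range N, (1:ℝ)/((n+1)*(n+2)) = 1 - 1/(N+1) := by
    intro N
    induction N with
    | zero => simp
    | succ N ih =>
      rw [Finset.sum_range_succ, ih]
      have h1 : ((N:ℝ)+1) ≠ 0 := by positivity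
      have h2 : ((N:ℝ)+2) ≠ 0 := by positivity
      push_cast
      field_simp
      ring
  rw [hasSum_iff_tendsto_nat_of_nonneg (fun i => by positivity)]
  simp_rw [h]
  have h0 : Filter.Tendsto (fun N:ℕ => 1/((N:ℝ)+1)) Filter.atTop (nhds 0) :=
    tendsto_one_div_add_atTop_nhds_zero_nat
  simpa using tendsto_const_nhds.sub h0

lemma binom_expand (l : ℕ) (x : ℝ) :
    (x - 1)^l = ∑ i ∈ range (l+1), (-1:ℝ)^i * (l.choose i : ℝ) * x^(l-i) := by
  rw [sub_pow]
  rw [← Finset.sum_range_reflect (fun i => (-1:ℝ)^i * (l.choose i : ℝ) * x^(l-i)) (l+1)]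
  apply Finset.sum_congr rfl
  intro j hj
  rw [Finset.mem_range] at hj
  have hj' : j ≤ l := by omega
  have e1 : l + 1 - 1 - j = l - j := by omega
  have e2 : l - (l - j) = j := by omega
  have e3 : l.choose (l - j) = l.choose j := Nat.choose_symm hj'
  have e4 : (-1:ℝ)^(l-j) = (-1)^(j+l) := by
    have : j + l = (l - j) + 2*j := by omega
    rw [this, pow_add, pow_mul]
    norm_num
  rw [e1, e2, e3, ← e4]
  ring

lemma poly_id (l : ℕ) (x : ℝ) :
    (x - 1)^l = (x + 1) * ∑ i ∈ Finset.range l,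
      ((-1:ℝ)^(i+1) * (bernoulliTriangle l (l-1-i) : ℝ)) * x^(l-1-i) + 2^l * x^l := by
  set F : ℕ → ℝ := fun i => (-1:ℝ)^(i+1) * (bernoulliTriangle l (l-i) : ℝ) * x^(l-i) with hF
  have key : ∀ i ∈ Finset.range l,
      (x+1) * (((-1:ℝ)^(i+1) * (bernoulliTriangle l (l-1-i) : ℝ)) * x^(l-1-i))
      = (F i - F (i+1)) + (-1:ℝ)^i * (l.choose i : ℝ) * x^(l-i) := by
    intro i hi
    rw [Finset.mem_range] at hi
    have h1 : l - i = (l - 1 - i) + 1 := by omega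
    have h2 : bernoulliTriangle l (l-i) = bernoulliTriangle l (l-1-i) + l.choose (l-i) := by
      rw [h1]; exact bt_succ_s6 l _
    have h3 : l.choose (l - i) = l.choose i := Nat.choose_symm (by omega)
    have h4 : l - (i+1) = l - 1 - i := by omega
    simp only [hF, h2, h3, h4]
    rw [h1]
    push_cast
    ring
  rw [Finset.mul_sum, Finset.sum_congr rfl key, Finset.sum_add_distrib,
    Finset.sum_range_sub' F l]
  have hF0 : F 0 = -(2^l * x^l) := by
    simp only [hF, Nat.sub_zero, bt_self]; push_cast; ring
  have hFl : F l = (-1:ℝ)^(l+1) := by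
    simp only [hF, Nat.sub_self, bt_zero]; push_cast; ring
  have hbin := binom_expand l x
  rw [Finset.sum_range_succ] at hbin
  simp only [Nat.sub_self, pow_zero, Nat.choose_self, Nat.cast_one] at hbin
  rw [hF0, hFl]
  have : ∑ i ∈ range l, (-1:ℝ)^i * (l.choose i : ℝ) * x^(l-i)
      = (x-1)^l - (-1)^l := by rw [hbin]; ring
  rw [this]
  have hsign : (-1:ℝ)^(l+1) = -(-1)^l := by rw [pow_succ]; ring
  rw [hsign]
  ring

noncomputable def zr (j : ℕ) : ℝ := ∑' n : ℕ, 1/((n:ℝ)+1)^j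

lemma zr_summable {j : ℕ} (hj : 2 ≤ j) : Summable (fun n : ℕ => 1/((n:ℝ)+1)^j) := by
  have h : Summable (fun n : ℕ => 1/(n:ℝ)^j) := Real.summable_one_div_nat_pow.2 (by omega)
  have := (summable_nat_add_iff 1).2 h
  simpa using this

lemma zr_eq_zeta {j : ℕ} (hj : 2 ≤ j) : riemannZeta j = (zr j : ℂ) := by
  have h : Summable (fun n : ℕ => 1/(n:ℝ)^j) := Real.summable_one_div_nat_pow.2 (by omega)
  have h1 : ∑' n : ℕ, 1/((n:ℝ))^j = zr j := by
    rw [h.tsum_eq_zero_add, zr]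
    norm_num [zero_pow (by omega : j ≠ 0)]
  rw [zeta_nat_eq_tsum_of_gt_one (by omega : 1 < j), ← h1, Complex.ofReal_tsum]
  congr 1 with n
  push_cast
  ring

lemma per_n (l n : ℕ) :
    ((n:ℝ)/((n:ℝ)+1))^l * (1/(((n:ℝ)+1)*((n:ℝ)+2)))
      = (∑ i ∈ range l, ((-1:ℝ)^(i+1) * (bernoulliTriangle l (l-1-i):ℝ))
          * (1/((n:ℝ)+1)^(i+2)))
        + 2^l * (1/(((n:ℝ)+1)*((n:ℝ)+2))) := by
  set b : ℕ → ℝ := fun i => (-1:ℝ)^(i+1) * (bernoulliTriangle l (l-1-i):ℝ) with hb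
  set x : ℝ := (n:ℝ)+1 with hxdef
  have hx : x ≠ 0 := by positivity
  have hx1 : x + 1 ≠ 0 := by positivity
  have hn2 : ((n:ℝ)+2) = x + 1 := by rw [hxdef]; ring
  have hn : (n:ℝ) = x - 1 := by rw [hxdef]; ring
  have hD : x^(l+1)*(x+1) ≠ 0 := by positivity
  apply mul_right_cancel₀ hD
  have hLHS : ((n:ℝ)/x)^l * (1/(x*((n:ℝ)+2))) * (x^(l+1)*(x+1)) = (x-1)^l := by
    rw [hn2, hn, div_pow]
    field_simp
    ring_nf
    try exact Or.inl trivial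
  rw [hLHS, hn2]
  rw [add_mul, Finset.sum_mul]
  have hterm : ∀ i ∈ range l,
      b i * (1/x^(i+2)) * (x^(l+1)*(x+1)) = (x+1) * (b i * x^(l-1-i)) := by
    intro i hi
    rw [Finset.mem_range] at hi
    have hpow : x^(l+1) = x^(i+2) * x^(l-1-i) := by rw [← pow_add]; congr 1; omega
    rw [hpow]
    field_simp
  rw [Finset.sum_congr rfl hterm, ← Finset.mul_sum]
  have h2 : (2:ℝ)^l * (1/(x*(x+1))) * (x^(l+1)*(x+1)) = 2^l * x^l := by
    have : x^(l+1) = x * x^l := by rw [pow_succ]; ring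
    rw [this]
    field_simp
  rw [h2, poly_id l x]

lemma hasSum_c (l : ℕ) :
    HasSum (fun n : ℕ => ((n:ℝ)/((n:ℝ)+1))^l * (1/(((n:ℝ)+1)*((n:ℝ)+2))))
      (∑ i ∈ range l, ((-1:ℝ)^(i+1) * (bernoulliTriangle l (l-1-i):ℝ)) * zr (i+2)
        + 2^l * 1) := by
  set b : ℕ → ℝ := fun i => (-1:ℝ)^(i+1) * (bernoulliTriangle l (l-1-i):ℝ) with hb
  have H1 : HasSum (fun n : ℕ => ∑ i ∈ range l, b i * (1/((n:ℝ)+1)^(i+2)))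
      (∑ i ∈ range l, b i * zr (i+2)) := by
    apply hasSum_sum
    intro i _
    exact ((zr_summable (by omega : 2 ≤ i+2)).hasSum).mul_left (b i)
  have H2 : HasSum (fun n : ℕ => (2:ℝ)^l * (1/(((n:ℝ)+1)*((n:ℝ)+2)))) ((2:ℝ)^l * 1) :=
    aux_tele.mul_left _
  have H := H1.add H2
  have hfun : (fun n : ℕ => ((n:ℝ)/((n:ℝ)+1))^l * (1/(((n:ℝ)+1)*((n:ℝ)+2))))
      = fun n : ℕ => (∑ i ∈ range l, b i * (1/((n:ℝ)+1)^(i+2)))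
          + 2^l * (1/(((n:ℝ)+1)*((n:ℝ)+2))) := funext (per_n l)
  rw [hfun]
  exact H

lemma sum_Icc_two {M : Type*} [AddCommMonoid M] (l : ℕ) (f : ℕ → M) :
    ∑ j ∈ Finset.Icc 2 (l+1), f j = ∑ i ∈ Finset.range l, f (i+2) := by
  induction l with
  | zero => simp
  | succ l ih => rw [Finset.sum_range_succ, ← ih, Finset.sum_Icc_succ_top (by omega)]

/-- For an IID sequence `X_1, X_2, …` with the Luroth distribution
`P(X = n) = 1/(n(n+1))`, the probability `ρ_k` that the maximum of `X_1, …, X_k`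
is achieved by exactly one index equals
`k (2^{k-1} + ∑_{j=2}^{k} T(k-1, k-j) ζ(j) (-1)^{j+1})`. -/
theorem rho_k_formula
    {Ω : Type*} [MeasurableSpace Ω] (μ : Measure Ω) [IsProbabilityMeasure μ]
    (X : ℕ → Ω → ℕ) (hmeas : ∀ i, Measurable (X i))
    (hindep : iIndepFun X μ)
    (hdist : ∀ i, ∀ n : ℕ, 1 ≤ n →
      μ {ω | X i ω = n} = ENNReal.ofReal (1 / (n * (n + 1))))
    (k : ℕ) (hk : 1 ≤ k) :
    ((μ {ω | ∃! i, i ∈ Finset.range k ∧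
        X i ω = (Finset.range k).sup (fun j => X j ω)}).toReal : ℂ)
      = k * (2 ^ (k - 1)
          + ∑ j ∈ Finset.Icc 2 k,
              (bernoulliTriangle (k - 1) (k - j) : ℂ) * riemannZeta j * (-1) ^ (j + 1)) := by
  obtain ⟨l, rfl⟩ : ∃ l, k = l + 1 := ⟨k - 1, by omega⟩
  clear hk
  set c : ℕ → ℝ := fun n => ((n:ℝ)/((n:ℝ)+1))^l * (1/(((n:ℝ)+1)*((n:ℝ)+2))) with hc
  have hcnonneg : ∀ n, 0 ≤ c n := fun n => by rw [hc]; positivity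
  have hms : ∀ i t, MeasurableSet {ω | X i ω = t} :=
    fun i t => hmeas i (measurableSet_singleton t)
  have hms' : ∀ i t, MeasurableSet {ω | X i ω ≤ t} := fun i t => hmeas i measurableSet_Iic
  have hdist' : ∀ i n : ℕ, μ {ω | X i ω = n+1}
      = ENNReal.ofReal (1/(((n:ℝ)+1)*((n:ℝ)+2))) := by
    intro i n
    have h := hdist i (n+1) (by omega)
    rw [h]
    congr 1
    push_cast
    ring_nf
  -- the union over positive values has full measure
  have hfull : ∀ i, μ (⋃ t : ℕ, {ω | X i ω = t+1}) = 1 := by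
    intro i
    rw [measure_iUnion ?_ (fun t => hms i (t+1))]
    · simp_rw [hdist']
      rw [← ENNReal.ofReal_tsum_of_nonneg (fun n => by positivity) aux_tele.summable,
        aux_tele.tsum_eq, ENNReal.ofReal_one]
    · intro a b hab
      simp only [Function.onFun, Set.disjoint_left]
      intro ω h1 h2
      simp only [Set.mem_setOf_eq] at h1 h2
      omega
  have hzero : ∀ i, μ {ω | X i ω = 0} = 0 := by
    intro i
    have hsub : {ω | X i ω = 0} ⊆ (⋃ t : ℕ, {ω | X i ω = t+1})ᶜ := by
      intro ω h
      simp only [Set.mem_setOf_eq] at h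
      simp only [Set.mem_compl_iff, Set.mem_iUnion, Set.mem_setOf_eq, not_exists]
      omega
    have := measure_mono (μ := μ) hsub
    rwa [measure_compl (MeasurableSet.iUnion (fun t => hms i (t+1))) (by simp),
      hfull i, measure_univ, tsub_self, nonpos_iff_eq_zero] at this
  have hle : ∀ i n, μ {ω | X i ω ≤ n} = ENNReal.ofReal ((n:ℝ)/((n:ℝ)+1)) := by
    intro i n
    induction n with
    | zero =>
      have h0 : {ω | X i ω ≤ 0} = {ω | X i ω = 0} := by ext ω; simp [Nat.le_zero]
      rw [h0, hzero i]
      norm_num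
    | succ n ih =>
      have hsplit : {ω | X i ω ≤ n+1} = {ω | X i ω ≤ n} ∪ {ω | X i ω = n+1} := by
        ext ω; simp only [Set.mem_setOf_eq, Set.mem_union]; omega
      have hdisj : Disjoint {ω | X i ω ≤ n} {ω | X i ω = n+1} := by
        simp only [Set.disjoint_left]
        intro ω h1 h2
        simp only [Set.mem_setOf_eq] at h1 h2
        omega
      rw [hsplit, measure_union hdisj (hms i (n+1)), ih, hdist' i n,
        ← ENNReal.ofReal_add (by positivity) (by positivity)]
      congr 1
      have h1 : ((n:ℝ)+1) ≠ 0 := by positivity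
      have h2 : ((n:ℝ)+2) ≠ 0 := by positivity
      push_cast
      field_simp
      ring
  classical
  set S : ℕ → ℕ → ℕ → Set Ω :=
    fun i n j => if j = i then {ω | X j ω = n+1} else {ω | X j ω ≤ n} with hS
  set W : ℕ → ℕ → Set Ω := fun i n => ⋂ j ∈ Finset.range (l+1), S i n j with hW
  have hWmem : ∀ i n ω, ω ∈ W i n ↔ ∀ j ∈ Finset.range (l+1), ω ∈ S i n j := by
    intro i n ω
    rw [hW]
    exact Set.mem_iInter₂
  have hSmem_self : ∀ i n ω, ω ∈ S i n i ↔ X i ω = n+1 := by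
    intro i n ω
    simp [hS]
  have hSmem_ne : ∀ i n j ω, j ≠ i → (ω ∈ S i n j ↔ X j ω ≤ n) := by
    intro i n j ω hne
    simp [hS, hne]
  have hWmeas : ∀ i n, MeasurableSet (W i n) := by
    intro i n
    apply MeasurableSet.biInter (Finset.range (l+1)).countable_toSet
    intro j _
    rw [hS]
    by_cases h : j = i
    · simp only [h, if_pos rfl]; exact hms i (n+1)
    · simp only [if_neg h]; exact hms' j n
  have hWμ : ∀ i ∈ Finset.range (l+1), ∀ n, μ (W i n) = ENNReal.ofReal (c n) := by
    intro i hi n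
    rw [hW]
    rw [hindep.meas_biInter (S := Finset.range (l+1)) (s := S i n) ?_]
    · rw [← Finset.mul_prod_erase _ _ hi]
      have h1 : μ (S i n i) = ENNReal.ofReal (1/(((n:ℝ)+1)*((n:ℝ)+2))) := by
        rw [hS]; simp only [if_pos rfl]; exact hdist' i n
      have h2 : ∀ j ∈ (Finset.range (l+1)).erase i,
          μ (S i n j) = ENNReal.ofReal ((n:ℝ)/((n:ℝ)+1)) := by
        intro j hj
        rw [hS]
        simp only [if_neg (Finset.mem_erase.1 hj).1]
        exact hle j n
      rw [h1, Finset.prod_congr rfl h2, Finset.prod_const,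
        Finset.card_erase_of_mem hi, Finset.card_range]
      simp only [Nat.add_sub_cancel]
      rw [← ENNReal.ofReal_pow (by positivity), ← ENNReal.ofReal_mul (by positivity)]
      congr 1
      rw [hc]
      ring
    · intro j _
      rw [hS]
      by_cases h : j = i
      · subst h
        simp only [if_pos rfl]
        exact ⟨{n+1}, measurableSet_singleton _, rfl⟩
      · simp only [if_neg h]
        exact ⟨Set.Iic n, measurableSet_Iic, rfl⟩
  set U : Set Ω := ⋃ i ∈ Finset.range (l+1), ⋃ n : ℕ, W i n with hU
  have hsup : ∀ i n ω, i ∈ Finset.range (l+1) → ω ∈ W i n →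
      (Finset.range (l+1)).sup (fun j => X j ω) = n+1 := by
    intro i n ω hi hω
    rw [hWmem] at hω
    have hXi : X i ω = n+1 := (hSmem_self i n ω).1 (hω i hi)
    apply le_antisymm
    · apply Finset.sup_le
      intro j hj
      by_cases h : j = i
      · subst h; omega
      · have := (hSmem_ne i n j ω h).1 (hω j hj)
        omega
    · calc n+1 = X i ω := hXi.symm
        _ ≤ _ := Finset.le_sup (f := fun j => X j ω) hi
  have hUsubE : U ⊆ {ω | ∃! i, i ∈ Finset.range (l+1) ∧
      X i ω = (Finset.range (l+1)).sup (fun j => X j ω)} := by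
    intro ω hω
    rw [hU] at hω
    simp only [Set.mem_iUnion] at hω
    obtain ⟨i, hi, n, hω⟩ := hω
    have hsup' := hsup i n ω hi hω
    rw [hWmem] at hω
    have hXi : X i ω = n+1 := (hSmem_self i n ω).1 (hω i hi)
    refine ⟨i, ⟨hi, by rw [hXi, hsup']⟩, ?_⟩
    rintro j ⟨hj, hXj⟩
    by_contra hne
    have := (hSmem_ne i n j ω hne).1 (hω j hj)
    rw [hsup'] at hXj
    omega
  have hEsubU : {ω | ∃! i, i ∈ Finset.range (l+1) ∧
      X i ω = (Finset.range (l+1)).sup (fun j => X j ω)} ⊆ U ∪ {ω | X 0 ω = 0} := by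
    rintro ω ⟨i, ⟨hi, hXi⟩, huniq⟩
    rcases hv : X i ω with _ | n
    · right
      have h0 : (0:ℕ) ∈ Finset.range (l+1) := by simp
      have h1 : X 0 ω ≤ (Finset.range (l+1)).sup (fun j => X j ω) :=
        Finset.le_sup (f := fun j => X j ω) h0
      rw [← hXi, hv] at h1
      simpa using h1
    · left
      rw [hU]
      simp only [Set.mem_iUnion]
      refine ⟨i, hi, n, ?_⟩
      rw [hWmem]
      intro j hj
      by_cases h : j = i
      · subst h; rw [hSmem_self]; exact hv
      · rw [hSmem_ne i n j ω h]
        by_contra hgt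
        push_neg at hgt
        have hle' : X j ω ≤ (Finset.range (l+1)).sup (fun j => X j ω) :=
          Finset.le_sup (f := fun j => X j ω) hj
        rw [← hXi, hv] at hle'
        have hXj : X j ω = n+1 := by omega
        have := huniq j ⟨hj, by rw [hXj, ← hv, hXi]⟩
        exact h this
  have hμEU : μ {ω | ∃! i, i ∈ Finset.range (l+1) ∧
      X i ω = (Finset.range (l+1)).sup (fun j => X j ω)} = μ U := by
    apply le_antisymm
    · calc μ _ ≤ μ (U ∪ {ω | X 0 ω = 0}) := measure_mono hEsubU
        _ ≤ μ U + μ {ω | X 0 ω = 0} := measure_union_le _ _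
        _ = μ U := by rw [hzero 0, add_zero]
    · exact measure_mono hUsubE
  have hμU : μ U = (l+1 : ℝ≥0∞) * ENNReal.ofReal (∑' n, c n) := by
    rw [hU]
    rw [measure_biUnion_finset ?_ ?_]
    · have hinner : ∀ i ∈ Finset.range (l+1),
          μ (⋃ n : ℕ, W i n) = ENNReal.ofReal (∑' n, c n) := by
        intro i hi
        rw [measure_iUnion ?_ (fun n => hWmeas i n)]
        · simp_rw [hWμ i hi]
          rw [← ENNReal.ofReal_tsum_of_nonneg hcnonneg (hasSum_c l).summable]
        · intro a b hab
          simp only [Function.onFun, Set.disjoint_left]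
          intro ω h1 h2
          rw [hWmem] at h1 h2
          have e1 := (hSmem_self i a ω).1 (h1 i hi)
          have e2 := (hSmem_self i b ω).1 (h2 i hi)
          omega
      rw [Finset.sum_congr rfl hinner, Finset.sum_const, Finset.card_range,
        nsmul_eq_mul]
      push_cast
      ring
    · intro i hi i' hi' hne
      simp only [Set.disjoint_left]
      intro ω h1 h2
      simp only [Set.mem_iUnion] at h1 h2
      obtain ⟨n, h1⟩ := h1
      obtain ⟨n', h2⟩ := h2
      rw [hWmem] at h1 h2
      simp only [Finset.coe_sort_coe, Finset.mem_coe] at hi hi'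
      have e1 := (hSmem_self i n ω).1 (h1 i hi)
      have e2 := (hSmem_ne i n i' ω (by exact fun h => hne h.symm)).1 (h1 i' hi')
      have e3 := (hSmem_self i' n' ω).1 (h2 i' hi')
      have e4 := (hSmem_ne i' n' i ω (by exact fun h => hne h)).1 (h2 i hi)
      omega
    · intro i _
      exact MeasurableSet.iUnion (fun n => hWmeas i n)
  have htoReal : (μ {ω | ∃! i, i ∈ Finset.range (l+1) ∧
      X i ω = (Finset.range (l+1)).sup (fun j => X j ω)}).toReal
      = ((l:ℝ)+1) * ∑' n, c n := by
    rw [hμEU, hμU, ENNReal.toReal_mul, ENNReal.toReal_ofReal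
      (tsum_nonneg hcnonneg)]
    congr 1
  have hStsum : ∑' n, c n = ∑ i ∈ Finset.range l,
      ((-1:ℝ)^(i+1) * (bernoulliTriangle l (l-1-i):ℝ)) * zr (i+2) + 2^l * 1 :=
    (hasSum_c l).tsum_eq
  rw [htoReal, hStsum]
  simp only [Nat.add_sub_cancel]
  rw [sum_Icc_two l (fun j => (bernoulliTriangle l (l+1-j) : ℂ) * riemannZeta j * (-1)^(j+1))]
  have hterm : ∀ i ∈ Finset.range l,
      (bernoulliTriangle l (l+1-(i+2)) : ℂ) * riemannZeta (((i+2:ℕ)):ℂ) * (-1)^(i+2+1)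
      = ((-1:ℂ)^(i+1) * ((bernoulliTriangle l (l-1-i):ℝ):ℂ)) * ((zr (i+2) : ℝ):ℂ) := by
    intro i _
    have h1 : l+1-(i+2) = l-1-i := by omega
    have h2 : i+2+1 = (i+1)+2 := by ring
    rw [h1, zr_eq_zeta (by omega : 2 ≤ i+2), h2]
    push_cast
    rw [pow_add]
    ring
  rw [Finset.sum_congr rfl hterm]
  push_cast
  ring
end

section
/- Let X_1, X_2, … be an IID sequence of random variables with the Luroth distribution, M_k = max(X_1, …, X_k), and let ρ_k be the probability that there exists exactly one index 1 ≤ i ≤ k with X_i = M_k. Then lim_{k → ∞} ρ_k = 1. -/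
open MeasureTheory ProbabilityTheory Finset
open scoped ENNReal

section LurothAux

set_option linter.unusedSectionVars false

lemma luroth_tele (m : ℕ) : ∑ n ∈ Finset.Icc 1 m, (1:ℝ)/(n*(n+1)) = 1 - 1/(m+1) := by
  induction m with
  | zero => simp
  | succ m ih =>
    rw [Finset.sum_Icc_succ_top (by omega), ih]
    have h1 : ((m:ℝ)+1) ≠ 0 := by positivity
    have h2 : ((m:ℝ)+2) ≠ 0 := by positivity
    push_cast
    field_simp
    ring

variable {Ω : Type*} [MeasurableSpace Ω] (μ : Measure Ω) [IsProbabilityMeasure μ]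
  {Y : Ω → ℕ} (hY : Measurable Y)
  (hd : ∀ n : ℕ, 1 ≤ n → μ (Y ⁻¹' {n}) = ENNReal.ofReal (1 / (n * (n + 1))))

include hY hd

lemma luroth_finsum (s : Finset ℕ) (hs : 0 ∉ s) :
    μ (⋃ n ∈ s, Y ⁻¹' {n}) = ENNReal.ofReal (∑ n ∈ s, (1:ℝ)/(n*(n+1))) := by
  rw [measure_biUnion_finset ?_ (fun n _ => hY (measurableSet_singleton n))]
  · rw [ENNReal.ofReal_sum_of_nonneg (fun n _ => by positivity)]
    exact Finset.sum_congr rfl (fun n hn => hd n (Nat.one_le_iff_ne_zero.mpr (fun h => hs (h ▸ hn))))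
  · intro i hi j hj hij
    simp only [Function.onFun, Set.disjoint_left]
    intro ω h1 h2
    exact hij (by simp at h1 h2; omega)

lemma luroth_head (m : ℕ) :
    ENNReal.ofReal (1 - 1/(m+1)) ≤ μ (Y ⁻¹' Set.Iic m) := by
  have h := luroth_finsum μ hY hd (Finset.Icc 1 m) (by simp)
  rw [luroth_tele] at h
  rw [← h]
  refine measure_mono ?_
  intro ω hω
  simp only [Set.mem_iUnion, Set.mem_preimage, Set.mem_singleton_iff] at hω ⊢
  obtain ⟨n, hn, h⟩ := hω
  simp only [Finset.mem_Icc] at hn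
  simp only [Set.mem_Iic]
  omega

lemma luroth_upper_aux (m : ℕ) :
    μ (Y ⁻¹' Set.Iic m) ≤ ENNReal.ofReal (1 - 1/(2*(m+1))) := by
  have hhalf : ENNReal.ofReal (1/(2*((m:ℝ)+1))) ≤ μ ((Y ⁻¹' Set.Iic m)ᶜ) := by
    have h := luroth_finsum μ hY hd (Finset.Icc (m+1) (2*m+1)) (by simp)
    have hsum : ∑ n ∈ Finset.Icc (m+1) (2*m+1), (1:ℝ)/(n*(n+1))
        = 1/(2*((m:ℝ)+1)) := by
      have h1 := luroth_tele (2*m+1)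
      have h2 := luroth_tele m
      have h3 : Finset.Icc 1 (2*m+1) = Finset.Icc 1 m ∪ Finset.Icc (m+1) (2*m+1) := by
        ext n; simp only [Finset.mem_Icc, Finset.mem_union]; omega
      rw [h3, Finset.sum_union (by
        simp only [Finset.disjoint_left, Finset.mem_Icc]; omega)] at h1
      rw [h2] at h1
      have key : 1/((m:ℝ)+1) - 1/(2*(m:ℝ)+1+1) = 1/(2*((m:ℝ)+1)) := by
        have h4 : ((m:ℝ)+1) ≠ 0 := by positivity
        field_simp
        ring
      push_cast at h1 ⊢
      linarith [h1, key]
    rw [hsum] at h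
    rw [← h]
    refine measure_mono ?_
    intro ω hω
    simp only [Set.mem_iUnion, Set.mem_preimage, Set.mem_singleton_iff] at hω
    obtain ⟨n, hn, hy⟩ := hω
    simp only [Finset.mem_Icc] at hn
    simp only [Set.mem_compl_iff, Set.mem_preimage, Set.mem_Iic, not_le]
    omega
  have hc : μ (Y ⁻¹' Set.Iic m) = 1 - μ ((Y ⁻¹' Set.Iic m)ᶜ) := by
    conv_lhs => rw [← compl_compl (Y ⁻¹' Set.Iic m)]
    exact prob_compl_eq_one_sub (hY measurableSet_Iic).compl
  rw [hc]
  calc 1 - μ ((Y ⁻¹' Set.Iic m)ᶜ) ≤ 1 - ENNReal.ofReal (1/(2*((m:ℝ)+1))) :=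
        tsub_le_tsub_left hhalf 1
    _ = ENNReal.ofReal (1 - 1/(2*(m+1))) := by
        rw [ENNReal.ofReal_sub _ (by positivity), ENNReal.ofReal_one]

lemma luroth_tail_aux (a : ℕ) (ha : 1 ≤ a) :
    ∑' m : ℕ, μ (Y ⁻¹' {a + m}) ≤ ENNReal.ofReal (1/a) := by
  have hdisj : Pairwise (Function.onFun Disjoint (fun m => Y ⁻¹' {a + m})) := by
    intro i j hij
    simp only [Function.onFun, Set.disjoint_left]
    intro ω h1 h2
    simp only [Set.mem_preimage, Set.mem_singleton_iff] at h1 h2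
    omega
  rw [← measure_iUnion hdisj (fun m => hY (measurableSet_singleton _))]
  have hsub : (⋃ m, Y ⁻¹' {a + m}) ⊆ (Y ⁻¹' Set.Iic (a-1))ᶜ := by
    intro ω hω
    simp only [Set.mem_iUnion, Set.mem_preimage, Set.mem_singleton_iff] at hω
    obtain ⟨m, hm⟩ := hω
    simp only [Set.mem_compl_iff, Set.mem_preimage, Set.mem_Iic, not_le]
    omega
  refine (measure_mono hsub).trans ?_
  have hhead := luroth_head μ hY hd (a-1)
  have hcast : ((a-1:ℕ):ℝ) + 1 = a := by
    rw [Nat.cast_sub ha]; push_cast; ring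
  rw [hcast] at hhead
  rw [prob_compl_eq_one_sub (hY measurableSet_Iic)]
  refine (tsub_le_tsub_left hhead 1).trans ?_
  rw [tsub_le_iff_right, ← ENNReal.ofReal_add (by positivity) (by
    have : (1:ℝ)/a ≤ 1 := by
      rw [div_le_one (by exact_mod_cast ha)]
      exact_mod_cast ha
    linarith)]
  rw [show (1:ℝ)/a + (1 - 1/a) = 1 by ring, ENNReal.ofReal_one]

end LurothAux

set_option maxHeartbeats 1000000 in
/-- For an IID sequence `X_1, X_2, …` with the Luroth distribution
`P(X = n) = 1/(n(n+1))`, the probability `ρ_k` that the maximum of `X_1, …, X_k`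
is achieved by exactly one index tends to `1` as `k → ∞`. -/
theorem rho_k_tendsto_one
    {Ω : Type*} [MeasurableSpace Ω] (μ : Measure Ω) [IsProbabilityMeasure μ]
    (X : ℕ → Ω → ℕ) (hmeas : ∀ i, Measurable (X i))
    (hindep : iIndepFun X μ)
    (hdist : ∀ i, ∀ n : ℕ, 1 ≤ n →
      μ {ω | X i ω = n} = ENNReal.ofReal (1 / (n * (n + 1)))) :
    Filter.Tendsto
      (fun k : ℕ => (μ {ω | ∃! i, i ∈ Finset.range k ∧
          X i ω = (Finset.range k).sup (fun j => X j ω)}).toReal)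
      Filter.atTop (nhds 1) := by
  have hdist' : ∀ i, ∀ n : ℕ, 1 ≤ n →
      μ (X i ⁻¹' {n}) = ENNReal.ofReal (1 / (n * (n + 1))) := by
    intro i n hn
    have : X i ⁻¹' {n} = {ω | X i ω = n} := by ext ω; simp [Set.mem_preimage]
    rw [this]; exact hdist i n hn
  set a : ℕ → ℕ := fun k => ⌈(k:ℝ) ^ ((3:ℝ)/4)⌉₊ with ha_def
  set A : ℕ → Set Ω := fun k => ⋂ i ∈ Finset.range k, X i ⁻¹' Set.Iic (a k - 1) with hA_def
  set S : ℕ → ℕ → ℕ → ℕ → Set Ω := fun k i j m =>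
    if i = j then ∅ else (X i ⁻¹' {a k + m} ∩ X j ⁻¹' {a k + m}) with hS_def
  set B : ℕ → Set Ω := fun k =>
    ⋃ i ∈ Finset.range k, ⋃ j ∈ Finset.range k, ⋃ m : ℕ, S k i j m with hB_def
  set E : ℕ → Set Ω := fun k => {ω | ∃! i, i ∈ Finset.range k ∧
      X i ω = (Finset.range k).sup (fun j => X j ω)} with hE_def
  -- bound on μ (A k)
  have hA : ∀ k, 1 ≤ a k →
      μ (A k) ≤ ENNReal.ofReal ((1 - 1/(2*(a k : ℝ)))^k) := by
    intro k hak
    have hprod := hindep.measure_inter_preimage_eq_mul (Finset.range k)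
      (sets := fun _ => Set.Iic (a k - 1)) (fun i _ => measurableSet_Iic)
    rw [hA_def]
    simp only []
    rw [hprod]
    have hone : ∀ i ∈ Finset.range k,
        μ (X i ⁻¹' Set.Iic (a k - 1)) ≤ ENNReal.ofReal (1 - 1/(2*(a k : ℝ))) := by
      intro i _
      refine (luroth_upper_aux μ (hmeas i) (hdist' i) (a k - 1)).trans_eq ?_
      congr 1
      rw [Nat.cast_sub hak]
      push_cast; ring_nf
    calc ∏ i ∈ Finset.range k, μ (X i ⁻¹' Set.Iic (a k - 1))
        ≤ ∏ _i ∈ Finset.range k, ENNReal.ofReal (1 - 1/(2*(a k : ℝ))) :=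
          Finset.prod_le_prod' hone
      _ = ENNReal.ofReal ((1 - 1/(2*(a k : ℝ)))^k) := by
          have hpos : (1:ℝ) ≤ (a k : ℝ) := by exact_mod_cast hak
          have hnn : (0:ℝ) ≤ 1 - 1/(2*(a k:ℝ)) := by
            have : (1:ℝ)/(2*(a k:ℝ)) ≤ 1/2 :=
              one_div_le_one_div_of_le (by norm_num) (by linarith)
            linarith
          rw [Finset.prod_const, Finset.card_range, ENNReal.ofReal_pow hnn]
  have hpair : ∀ (i j n : ℕ), i ≠ j → 1 ≤ n →
      μ (X i ⁻¹' {n} ∩ X j ⁻¹' {n})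
        = ENNReal.ofReal (1/((n:ℝ)*((n:ℝ)+1))) * μ (X j ⁻¹' {n}) := by
    intro i j n hij hn
    rw [(hindep.indepFun hij).measure_inter_preimage_eq_mul {n} {n}
      (measurableSet_singleton n) (measurableSet_singleton n), hdist' i n hn]
  have hB : ∀ k, 1 ≤ a k →
      μ (B k) ≤ (k:ℝ≥0∞) * ((k:ℝ≥0∞) * ENNReal.ofReal (1/((a k:ℝ))^3)) := by
    intro k hak
    have hone : ∀ i j : ℕ, ∑' m : ℕ, μ (S k i j m) ≤ ENNReal.ofReal (1/((a k:ℝ))^3) := by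
      intro i j
      by_cases hij : i = j
      · simp [hS_def, hij]
      · have hterm : ∀ m : ℕ, μ (S k i j m)
            ≤ ENNReal.ofReal (1/((a k:ℝ)*(a k:ℝ))) * μ (X j ⁻¹' {a k + m}) := by
          intro m
          rw [hS_def]
          simp only [if_neg hij]
          rw [hpair i j (a k + m) hij (by omega)]
          refine mul_le_mul_left (ENNReal.ofReal_le_ofReal ?_) _
          have h2 : (0:ℝ) < a k := by exact_mod_cast hak
          apply one_div_le_one_div_of_le (by positivity)
          push_cast
          nlinarith [(Nat.cast_nonneg m : (0:ℝ) ≤ (m:ℝ))]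
        calc ∑' m, μ (S k i j m)
            ≤ ∑' m, ENNReal.ofReal (1/((a k:ℝ)*(a k:ℝ))) * μ (X j ⁻¹' {a k + m}) :=
              ENNReal.tsum_le_tsum hterm
          _ = ENNReal.ofReal (1/((a k:ℝ)*(a k:ℝ))) * ∑' m, μ (X j ⁻¹' {a k + m}) :=
              ENNReal.tsum_mul_left
          _ ≤ ENNReal.ofReal (1/((a k:ℝ)*(a k:ℝ))) * ENNReal.ofReal (1/(a k:ℝ)) :=
              mul_le_mul_right (luroth_tail_aux μ (hmeas j) (hdist' j) (a k) hak) _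
          _ = ENNReal.ofReal (1/((a k:ℝ))^3) := by
              rw [← ENNReal.ofReal_mul (by positivity)]
              congr 1
              have h2 : (0:ℝ) < a k := by exact_mod_cast hak
              field_simp
    calc μ (B k) ≤ ∑ i ∈ Finset.range k, μ (⋃ j ∈ Finset.range k, ⋃ m : ℕ, S k i j m) :=
          measure_biUnion_finset_le _ _
      _ ≤ ∑ i ∈ Finset.range k, ∑ j ∈ Finset.range k, μ (⋃ m : ℕ, S k i j m) :=
          Finset.sum_le_sum (fun i _ => measure_biUnion_finset_le _ _)
      _ ≤ ∑ i ∈ Finset.range k, ∑ j ∈ Finset.range k, ENNReal.ofReal (1/((a k:ℝ))^3) :=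
          Finset.sum_le_sum (fun i _ => Finset.sum_le_sum (fun j _ =>
            (measure_iUnion_le _).trans (hone i j)))
      _ = (k:ℝ≥0∞) * ((k:ℝ≥0∞) * ENNReal.ofReal (1/((a k:ℝ))^3)) := by
          simp [Finset.sum_const, Finset.card_range, nsmul_eq_mul]
  have hcover : ∀ k, 1 ≤ a k → (Set.univ : Set Ω) ⊆ E k ∪ (A k ∪ B k) := by
    intro k hak ω _
    by_cases hA' : ω ∈ A k
    · exact Or.inr (Or.inl hA')
    by_cases hB' : ω ∈ B k
    · exact Or.inr (Or.inr hB')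
    left
    have hex : ∃ i ∈ Finset.range k, a k ≤ X i ω := by
      by_contra h
      push_neg at h
      apply hA'
      rw [hA_def]
      simp only [Set.mem_iInter, Set.mem_preimage, Set.mem_Iic]
      intro i hi
      have := h i hi
      omega
    obtain ⟨i₀, hi₀, hXi₀⟩ := hex
    have hMa : a k ≤ (Finset.range k).sup (fun j => X j ω) :=
      hXi₀.trans (Finset.le_sup (f := fun j => X j ω) hi₀)
    obtain ⟨i₁, hi₁, hsup⟩ := Finset.exists_mem_eq_sup (Finset.range k)
      ⟨i₀, hi₀⟩ (fun j => X j ω)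
    refine ⟨i₁, ⟨hi₁, hsup.symm⟩, ?_⟩
    rintro j ⟨hjk, hjM⟩
    by_contra hne
    apply hB'
    rw [hB_def]
    simp only [Set.mem_iUnion]
    refine ⟨j, hjk, i₁, hi₁, (Finset.range k).sup (fun j => X j ω) - a k, ?_⟩
    rw [hS_def]
    simp only [if_neg hne, Set.mem_inter_iff, Set.mem_preimage, Set.mem_singleton_iff]
    constructor
    · omega
    · rw [← hsup]
      omega
  set e : ℕ → ℝ := fun k =>
    (1 - 1/(2*(a k:ℝ)))^k + (k:ℝ)*((k:ℝ)*(1/(a k:ℝ)^3)) with he_def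
  have hbase : ∀ k, 1 ≤ a k → (0:ℝ) ≤ 1 - 1/(2*(a k:ℝ)) := by
    intro k hak
    have h1 : (1:ℝ) ≤ (a k:ℝ) := by exact_mod_cast hak
    have : (1:ℝ)/(2*(a k:ℝ)) ≤ 1/2 :=
      one_div_le_one_div_of_le (by norm_num) (by linarith)
    linarith
  have hEbound : ∀ k, 1 ≤ a k → 1 - e k ≤ (μ (E k)).toReal := by
    intro k hak
    have h1 : (1:ℝ≥0∞) ≤ μ (E k) + (μ (A k) + μ (B k)) := by
      calc (1:ℝ≥0∞) = μ (Set.univ : Set Ω) := measure_univ.symm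
        _ ≤ μ (E k ∪ (A k ∪ B k)) := measure_mono (hcover k hak)
        _ ≤ μ (E k) + μ (A k ∪ B k) := measure_union_le _ _
        _ ≤ μ (E k) + (μ (A k) + μ (B k)) := add_le_add_right (measure_union_le _ _) _
    have h2 : μ (A k) + μ (B k) ≤ ENNReal.ofReal (e k) := by
      rw [he_def]
      simp only []
      rw [ENNReal.ofReal_add (pow_nonneg (hbase k hak) k) (by positivity)]
      refine add_le_add (hA k hak) ((hB k hak).trans_eq ?_)
      rw [ENNReal.ofReal_mul (by positivity), ENNReal.ofReal_mul (by positivity),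
        ENNReal.ofReal_natCast]
    have h3 : (1:ℝ≥0∞) ≤ μ (E k) + ENNReal.ofReal (e k) :=
      h1.trans (add_le_add_right h2 _)
    have hfin : μ (E k) ≠ ⊤ := (measure_lt_top μ _).ne
    have h4 := ENNReal.toReal_mono
      (ENNReal.add_ne_top.mpr ⟨hfin, ENNReal.ofReal_ne_top⟩) h3
    rw [ENNReal.toReal_one, ENNReal.toReal_add hfin ENNReal.ofReal_ne_top,
      ENNReal.toReal_ofReal (by
        exact add_nonneg (pow_nonneg (hbase k hak) k) (by positivity))] at h4
    linarith
  have hak1 : ∀ k : ℕ, 1 ≤ k → 1 ≤ a k := by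
    intro k hk
    rw [ha_def]
    simp only [Nat.one_le_ceil_iff]
    have hx : (0:ℝ) < (k:ℝ) := by exact_mod_cast hk
    positivity
  have he0 : Filter.Tendsto e Filter.atTop (nhds 0) := by
    have hg : Filter.Tendsto (fun k : ℕ =>
        Real.exp (-((k:ℝ) ^ ((1:ℝ)/4) / 4)) + ((k:ℝ)) ^ (-((1:ℝ)/4)))
        Filter.atTop (nhds 0) := by
      have h1 : Filter.Tendsto (fun k : ℕ => Real.exp (-((k:ℝ) ^ ((1:ℝ)/4) / 4)))
          Filter.atTop (nhds 0) := by
        apply Real.tendsto_exp_atBot.comp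
        apply Filter.tendsto_neg_atTop_atBot.comp
        apply Filter.Tendsto.atTop_div_const (by norm_num : (0:ℝ) < 4)
        exact (tendsto_rpow_atTop (by norm_num)).comp tendsto_natCast_atTop_atTop
      have h2 : Filter.Tendsto (fun k : ℕ => ((k:ℝ)) ^ (-((1:ℝ)/4)))
          Filter.atTop (nhds 0) :=
        (tendsto_rpow_neg_atTop (by norm_num)).comp tendsto_natCast_atTop_atTop
      have h3 := h1.add h2
      norm_num at h3
      exact h3
    apply squeeze_zero' ?_ ?_ hg
    · filter_upwards [Filter.eventually_atTop.mpr ⟨1, fun k hk => hk⟩] with k hk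
      have hak := hak1 k hk
      have h0 := hbase k hak
      rw [he_def]
      have h2 : (0:ℝ) < (a k : ℝ) := by exact_mod_cast hak
      positivity
    · filter_upwards [Filter.eventually_atTop.mpr ⟨1, fun k hk => hk⟩] with k hk
      have hak := hak1 k hk
      set x : ℝ := (k:ℝ) with hx_def
      set b : ℝ := (a k : ℝ) with hb_def
      have hx1 : (1:ℝ) ≤ x := by rw [hx_def]; exact_mod_cast hk
      have hx0 : (0:ℝ) < x := by linarith
      have hbpos : (0:ℝ) < b := by
        rw [hb_def]; exact_mod_cast hak
      set r : ℝ := x ^ ((3:ℝ)/4) with hr_def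
      have hr0 : (0:ℝ) < r := Real.rpow_pos_of_pos hx0 _
      have hr1 : (1:ℝ) ≤ r := by
        rw [hr_def, show (1:ℝ) = 1 ^ ((3:ℝ)/4) by rw [Real.one_rpow]]
        exact Real.rpow_le_rpow zero_le_one hx1 (by norm_num)
      have hb1 : r ≤ b := by
        rw [hb_def, ha_def]
        exact Nat.le_ceil _
      have hb2 : b ≤ 2 * r := by
        have := Nat.ceil_lt_add_one hr0.le
        rw [hb_def, ha_def]
        simp only []
        rw [hr_def] at this ⊢
        linarith
      have hq : x ^ ((1:ℝ)/4) = x / r := by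
        rw [hr_def, eq_div_iff (Real.rpow_pos_of_pos hx0 _).ne', ← Real.rpow_add hx0]
        norm_num
      rw [he_def]
      simp only []
      refine add_le_add ?_ ?_
      · -- (1 - 1/(2b))^k ≤ exp (-(x^(1/4)/4))
        have hstep : 1 - 1/(2*b) ≤ Real.exp (-(1/(2*b))) := by
          have := Real.add_one_le_exp (-(1/(2*b)))
          linarith
        calc (1 - 1/(2*b))^k ≤ (Real.exp (-(1/(2*b))))^k :=
              pow_le_pow_left₀ (hbase k hak) hstep k
          _ = Real.exp ((k:ℝ) * -(1/(2*b))) := by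
              rw [Real.exp_nat_mul]
          _ ≤ Real.exp (-(x ^ ((1:ℝ)/4) / 4)) := by
              apply Real.exp_le_exp.mpr
              rw [hq]
              have h4r : x / (4*r) ≤ x / (2*b) := by
                apply div_le_div_of_nonneg_left hx0.le (by linarith) (by linarith)
              have : (k:ℝ) * -(1/(2*b)) = -(x/(2*b)) := by
                rw [← hx_def]; ring
              rw [this]
              have : x / r / 4 = x / (4*r) := by rw [div_div, mul_comm]
              rw [this]
              linarith
      · -- x*(x*(1/b^3)) ≤ x^(-(1/4))
        have hr3 : r ^ (3:ℕ) = x ^ ((9:ℝ)/4) := by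
          rw [hr_def, ← Real.rpow_natCast (x ^ ((3:ℝ)/4)) 3, ← Real.rpow_mul hx0.le]
          norm_num
        have h9pos : (0:ℝ) < x ^ ((9:ℝ)/4) := Real.rpow_pos_of_pos hx0 _
        have hb3 : x ^ ((9:ℝ)/4) ≤ b^3 := by
          rw [← hr3]
          exact pow_le_pow_left₀ hr0.le hb1 3
        have hmono : x*(x*(1/b^3)) ≤ x*(x*(1/x^((9:ℝ)/4))) :=
          mul_le_mul_of_nonneg_left (mul_le_mul_of_nonneg_left
            (one_div_le_one_div_of_le h9pos hb3) hx0.le) hx0.le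
        refine hmono.trans (le_of_eq ?_)
        have hx2 : x ^ (2:ℝ) = x * x := by
          rw [show (2:ℝ) = ((2:ℕ):ℝ) by norm_num, Real.rpow_natCast]
          ring
        calc x*(x*(1/x^((9:ℝ)/4))) = x^(2:ℝ) * (x^((9:ℝ)/4))⁻¹ := by
              rw [hx2]; ring
          _ = x^(2:ℝ) * x^(-((9:ℝ)/4)) := by rw [← Real.rpow_neg hx0.le]
          _ = x^((2:ℝ) + -((9:ℝ)/4)) := (Real.rpow_add hx0 _ _).symm
          _ = x ^ (-((1:ℝ)/4)) := by norm_num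
  have hup : ∀ k, (μ (E k)).toReal ≤ 1 := by
    intro k
    rw [← ENNReal.toReal_one]
    exact ENNReal.toReal_mono ENNReal.one_ne_top prob_le_one
  have hlow : ∀ᶠ k in Filter.atTop, 1 - e k ≤ (μ (E k)).toReal := by
    filter_upwards [Filter.eventually_atTop.mpr ⟨1, fun k hk => hk⟩] with k hk
    exact hEbound k (hak1 k hk)
  have hlim : Filter.Tendsto (fun k => 1 - e k) Filter.atTop (nhds 1) := by
    simpa using (tendsto_const_nhds (x := (1:ℝ))).sub he0
  exact tendsto_of_tendsto_of_tendsto_of_le_of_le' hlim tendsto_const_nhds hlow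
    (Filter.Eventually.of_forall hup)
end

section
/- Let X_1, X_2, … be an IID sequence of random variables with the Luroth distribution and M_k = max(X_1, …, X_k). Then for every real c > 0, lim_{k → ∞} P(M_k ≤ c·k) = e^{−1/c}. -/
open MeasureTheory ProbabilityTheory Filter

/-- Telescoping sum: the tail of the Luroth distribution past `m` sums to `1/(m+1)`. -/
lemma luroth_tail_hasSum (m : ℕ) :
    HasSum (fun j : ℕ => 1 / (((m + 1 + j : ℕ) : ℝ) * (((m + 1 + j : ℕ) : ℝ) + 1)))
      (1 / ((m : ℝ) + 1)) := by
  have key : ∀ J : ℕ, ∑ j ∈ Finset.range J,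
      (1 / (((m + 1 + j : ℕ) : ℝ) * (((m + 1 + j : ℕ) : ℝ) + 1)))
      = 1 / ((m : ℝ) + 1) - 1 / ((m : ℝ) + 1 + J) := by
    intro J
    induction J with
    | zero => simp
    | succ J ih =>
      rw [Finset.sum_range_succ, ih]
      push_cast
      have h1 : ((m : ℝ) + 1 + J) ≠ 0 := by positivity
      have h2 : ((m : ℝ) + 1 + J + 1) ≠ 0 := by positivity
      field_simp
      ring
  rw [hasSum_iff_tendsto_nat_of_nonneg (fun i => by positivity)]
  simp_rw [key]
  have h0 : Tendsto (fun J : ℕ => 1 / ((m : ℝ) + 1 + J)) atTop (nhds 0) := by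
    have h1 : Tendsto (fun J : ℕ => ((m : ℝ) + 1 + J)) atTop atTop :=
      tendsto_atTop_add_const_left _ _ tendsto_natCast_atTop_atTop
    simpa [Function.comp_def, one_div] using tendsto_inv_atTop_zero.comp h1
  simpa using tendsto_const_nhds.sub h0

/-- CDF of the Luroth distribution. -/
lemma luroth_cdf {Ω : Type*} [MeasurableSpace Ω] (μ : Measure Ω) [IsProbabilityMeasure μ]
    (Y : Ω → ℕ) (hY : Measurable Y)
    (hd : ∀ n : ℕ, 1 ≤ n → μ {ω | Y ω = n} = ENNReal.ofReal (1 / (n * (n + 1))))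
    (m : ℕ) : μ {ω | Y ω ≤ m} = ENNReal.ofReal ((m : ℝ) / (m + 1)) := by
  have hmeasn : ∀ n : ℕ, MeasurableSet {ω | Y ω = n} :=
    fun n => hY (measurableSet_singleton n)
  have hs : MeasurableSet {ω | Y ω ≤ m} := hY (show MeasurableSet {n : ℕ | n ≤ m} from trivial)
  have hcompl : {ω | Y ω ≤ m}ᶜ = ⋃ j : ℕ, {ω | Y ω = m + 1 + j} := by
    ext ω
    simp only [Set.mem_compl_iff, Set.mem_setOf_eq, Set.mem_iUnion, not_le]
    constructor
    · intro h; exact ⟨Y ω - (m + 1), by omega⟩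
    · rintro ⟨j, hj⟩; omega
  have hdisj : Pairwise (Function.onFun Disjoint fun j : ℕ => {ω | Y ω = m + 1 + j}) := by
    intro i j hij
    simp only [Function.onFun, Set.disjoint_left, Set.mem_setOf_eq]
    intro ω h1 h2
    omega
  have hsum := luroth_tail_hasSum m
  have htail : μ ({ω | Y ω ≤ m}ᶜ) = ENNReal.ofReal (1 / ((m : ℝ) + 1)) := by
    rw [hcompl, measure_iUnion hdisj (fun j => hmeasn _)]
    have heach : ∀ j : ℕ, μ {ω | Y ω = m + 1 + j}
        = ENNReal.ofReal (1 / (((m + 1 + j : ℕ) : ℝ) * (((m + 1 + j : ℕ) : ℝ) + 1))) := by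
      intro j
      have := hd (m + 1 + j) (by omega)
      simpa using this
    simp_rw [heach]
    rw [← ENNReal.ofReal_tsum_of_nonneg (fun j => by positivity) hsum.summable,
      hsum.tsum_eq]
  have h1 : μ {ω | Y ω ≤ m} = 1 - μ ({ω | Y ω ≤ m}ᶜ) := by
    rw [eq_comm, ENNReal.sub_eq_of_eq_add (measure_ne_top μ _)]
    rw [← measure_union (disjoint_compl_left.symm ..) hs.compl, Set.union_compl_self,
      measure_univ]
  rw [h1, htail, ← ENNReal.ofReal_one,
    ← ENNReal.ofReal_sub _ (by positivity)]
  congr 1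
  have : ((m : ℝ) + 1) ≠ 0 := by positivity
  field_simp
  ring

/-- For an IID sequence `X_1, X_2, …` with the Luroth distribution
`P(X = n) = 1/(n(n+1))` and `M_k = max(X_1, …, X_k)`, for every `c > 0`,
`lim_{k → ∞} P(M_k ≤ c k) = e^{-1/c}`. -/
theorem max_luroth_scaling_limit
    {Ω : Type*} [MeasurableSpace Ω] (μ : Measure Ω) [IsProbabilityMeasure μ]
    (X : ℕ → Ω → ℕ) (hmeas : ∀ i, Measurable (X i))
    (hindep : iIndepFun X μ)
    (hdist : ∀ i, ∀ n : ℕ, 1 ≤ n →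
      μ {ω | X i ω = n} = ENNReal.ofReal (1 / (n * (n + 1))))
    (c : ℝ) (hc : 0 < c) :
    Filter.Tendsto
      (fun k : ℕ =>
        (μ {ω | (((Finset.range k).sup fun j => X j ω : ℕ) : ℝ) ≤ c * k}).toReal)
      Filter.atTop (nhds (Real.exp (-1 / c))) := by
  have hcdf : ∀ i m : ℕ, μ {ω | X i ω ≤ m} = ENNReal.ofReal ((m : ℝ) / (m + 1)) :=
    fun i => luroth_cdf μ (X i) (hmeas i) (hdist i)
  -- product formula
  have hprod : ∀ k m : ℕ,
      μ {ω | ((Finset.range k).sup fun j => X j ω) ≤ m}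
        = ENNReal.ofReal ((m : ℝ) / (m + 1)) ^ k := by
    intro k m
    have hev : {ω | ((Finset.range k).sup fun j => X j ω) ≤ m}
        = ⋂ j ∈ Finset.range k, {ω | X j ω ≤ m} := by
      ext ω
      simp [Finset.sup_le_iff]
    have hmb := hindep.meas_biInter (S := Finset.range k)
      (s := fun j => {ω | X j ω ≤ m}) (fun i _ => ⟨{n | n ≤ m}, trivial, rfl⟩)
    rw [hev, hmb]
    simp [hcdf, Finset.prod_const]
  -- rewrite the probability via the floor
  have hev2 : ∀ k : ℕ,
      (μ {ω | (((Finset.range k).sup fun j => X j ω : ℕ) : ℝ) ≤ c * k}).toReal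
        = ((⌊c * k⌋₊ : ℝ) / (⌊c * k⌋₊ + 1)) ^ k := by
    intro k
    have hck : (0 : ℝ) ≤ c * k := by positivity
    have : {ω | (((Finset.range k).sup fun j => X j ω : ℕ) : ℝ) ≤ c * k}
        = {ω | ((Finset.range k).sup fun j => X j ω) ≤ ⌊c * k⌋₊} := by
      ext ω
      simp [Nat.le_floor_iff hck]
    rw [this, hprod, ENNReal.toReal_pow, ENNReal.toReal_ofReal (by positivity)]
  -- the limit
  set b : ℕ → ℝ := fun k => (⌊c * k⌋₊ : ℝ) + 1 with hb
  have hb_ge : ∀ k : ℕ, c * k ≤ b k := fun k => (Nat.lt_floor_add_one _).le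
  have hb_le : ∀ k : ℕ, b k ≤ c * k + 1 := by
    intro k
    have := Nat.floor_le (by positivity : (0:ℝ) ≤ c * k)
    simp only [hb]; linarith
  have hb_pos : ∀ k : ℕ, 0 < b k := fun k => by positivity
  have hb_top : Tendsto b atTop atTop := by
    apply tendsto_atTop_mono hb_ge
    exact Tendsto.const_mul_atTop hc tendsto_natCast_atTop_atTop
  have hratio : Tendsto (fun k : ℕ => (k : ℝ) / b k) atTop (nhds (1 / c)) := by
    have hdiv : Tendsto (fun k : ℕ => b k / k) atTop (nhds c) := by
      apply tendsto_of_tendsto_of_tendsto_of_le_of_le'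
          (tendsto_const_nhds : Tendsto (fun _ : ℕ => c) atTop (nhds c))
          (by simpa using (tendsto_const_nhds (x := c)).add tendsto_one_div_atTop_nhds_zero_nat :
            Tendsto (fun k : ℕ => c + 1 / (k : ℝ)) atTop (nhds c))
      · filter_upwards [eventually_ge_atTop 1] with k hk
        have hk' : (0 : ℝ) < k := by exact_mod_cast hk
        rw [le_div_iff₀ hk']
        exact hb_ge k
      · filter_upwards [eventually_ge_atTop 1] with k hk
        have hk' : (0 : ℝ) < k := by exact_mod_cast hk
        rw [div_le_iff₀ hk', add_mul, one_div, inv_mul_cancel₀ hk'.ne']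
        calc b k ≤ c * k + 1 := hb_le k
          _ = c * k + 1 := rfl
    have := hdiv.inv₀ hc.ne'
    rw [← one_div] at this
    apply this.congr'
    filter_upwards [eventually_ge_atTop 1] with k hk
    rw [inv_div]
  have hmul : Tendsto (fun k : ℕ => (k : ℝ) * Real.log (1 + (-1) / b k)) atTop
      (nhds (-1 / c)) := by
    have h2 : Tendsto (fun k : ℕ => b k * Real.log (1 + (-1) / b k)) atTop (nhds (-1)) :=
      (Real.tendsto_mul_log_one_add_div_atTop (-1)).comp hb_top
    have := hratio.mul h2
    have heq : (1 / c) * (-1) = -1 / c := by ring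
    rw [heq] at this
    apply this.congr
    intro k
    have : b k ≠ 0 := (hb_pos k).ne'
    field_simp
  have hexp : Tendsto (fun k : ℕ => Real.exp ((k : ℝ) * Real.log (1 + (-1) / b k))) atTop
      (nhds (Real.exp (-1 / c))) := (Real.continuous_exp.tendsto _).comp hmul
  apply hexp.congr'
  filter_upwards [eventually_gt_atTop (⌈1 / c⌉₊)] with k hk
  have hk1 : (1 : ℝ) ≤ c * k := by
    have h1 : (1 / c : ℝ) < k := lt_of_le_of_lt (Nat.le_ceil _) (by exact_mod_cast hk)
    rw [div_lt_iff₀ hc] at h1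
    calc (1 : ℝ) ≤ k * c := h1.le
      _ = c * k := mul_comm _ _
  have hfl : 1 ≤ ⌊c * k⌋₊ := Nat.le_floor (by exact_mod_cast hk1)
  have hfl' : (1 : ℝ) ≤ (⌊c * k⌋₊ : ℝ) := by exact_mod_cast hfl
  have hbase : (0 : ℝ) < (⌊c * k⌋₊ : ℝ) / (⌊c * k⌋₊ + 1) := by positivity
  have hbeq : 1 + (-1) / b k = (⌊c * k⌋₊ : ℝ) / (⌊c * k⌋₊ + 1) := by
    have : b k ≠ 0 := (hb_pos k).ne'
    simp only [hb] at this ⊢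
    field_simp
    ring
  rw [hev2 k, hbeq, Real.exp_nat_mul, Real.exp_log hbase]
end

section
/- Let X_1, X_2, … be an IID sequence of random variables with the Luroth distribution and M_k = max(X_1, …, X_k). Then M_k/(k log k) converges to 0 in probability: for every ε > 0, lim_{k → ∞} P(M_k > ε · k log k) = 0. -/
open MeasureTheory ProbabilityTheory
open scoped ENNReal

lemma luroth_telescope (m : ℕ) :
    ∑ n ∈ Finset.Icc 1 m, (1 / (n * (n + 1)) : ℝ) = 1 - 1 / (m + 1) := by
  induction m with
  | zero => simp
  | succ m ih =>
    rw [Finset.sum_Icc_succ_top (by norm_num), ih]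
    have h1 : (m : ℝ) + 1 ≠ 0 := by positivity
    have h2 : (m : ℝ) + 2 ≠ 0 := by positivity
    push_cast
    field_simp
    ring

lemma luroth_tail {Ω : Type*} [MeasurableSpace Ω] (μ : Measure Ω) [IsProbabilityMeasure μ]
    (Y : Ω → ℕ) (hY : Measurable Y)
    (hd : ∀ n : ℕ, 1 ≤ n → μ {ω | Y ω = n} = ENNReal.ofReal (1 / (n * (n + 1))))
    (m : ℕ) : μ {ω | m < Y ω} ≤ ENNReal.ofReal (1 / (m + 1)) := by
  set A : Set Ω := ⋃ n ∈ Finset.Icc 1 m, {ω | Y ω = n} with hA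
  have hmeasA : MeasurableSet A :=
    Finset.measurableSet_biUnion _ fun n _ => hY (MeasurableSet.singleton n)
  have hmeasB : MeasurableSet {ω | m < Y ω} := hY measurableSet_Ioi
  have hdisj : Disjoint A {ω | m < Y ω} := by
    rw [Set.disjoint_left]
    rintro ω hω hω'
    simp only [hA, Set.mem_iUnion, Set.mem_setOf_eq] at hω hω'
    obtain ⟨n, hn, hYn⟩ := hω
    have := (Finset.mem_Icc.mp hn).2
    omega
  have hμA : μ A = ENNReal.ofReal (1 - 1 / (m + 1)) := by
    rw [hA, measure_biUnion_finset]
    · rw [← luroth_telescope m,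
        ENNReal.ofReal_sum_of_nonneg (fun n _ => by positivity)]
      apply Finset.sum_congr rfl
      intro n hn
      exact hd n (Finset.mem_Icc.mp hn).1
    · intro a _ b _ hab
      simp only [Function.onFun]
      rw [Set.disjoint_left]
      rintro ω hω hω'
      simp only [Set.mem_setOf_eq] at hω hω'
      exact hab (hω ▸ hω')
    · exact fun n _ => hY (MeasurableSet.singleton n)
  have hsum : μ A + μ {ω | m < Y ω} ≤ 1 := by
    rw [← measure_union hdisj hmeasB]
    exact prob_le_one
  have hle : μ {ω | m < Y ω} ≤ 1 - μ A := ENNReal.le_sub_of_add_le_left (measure_ne_top μ A) hsum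
  have key : (1 : ℝ≥0∞) - μ A = ENNReal.ofReal (1 / (m + 1)) := by
    rw [hμA, ← ENNReal.ofReal_one, ← ENNReal.ofReal_sub]
    · norm_num
    · have hle1 : (1 : ℝ) / (m + 1) ≤ 1 := by
        rw [div_le_one (by positivity)]
        linarith [Nat.cast_nonneg (α := ℝ) m]
      linarith
  rwa [key] at hle

/-- For an IID sequence `X_1, X_2, …` with the Luroth distribution
`P(X = n) = 1/(n(n+1))` and `M_k = max(X_1, …, X_k)`, the maximum `M_k / (k log k)`
tends to `0` in probability: for every `ε > 0`, `P(M_k > ε k log k) → 0`. -/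
theorem max_div_klogk_tendsto_zero_in_probability
    {Ω : Type*} [MeasurableSpace Ω] (μ : Measure Ω) [IsProbabilityMeasure μ]
    (X : ℕ → Ω → ℕ) (hmeas : ∀ i, Measurable (X i))
    (hindep : iIndepFun X μ)
    (hdist : ∀ i, ∀ n : ℕ, 1 ≤ n →
      μ {ω | X i ω = n} = ENNReal.ofReal (1 / (n * (n + 1))))
    (ε : ℝ) (hε : 0 < ε) :
    Filter.Tendsto
      (fun k : ℕ =>
        (μ {ω | ε * (k * Real.log k)
            < (((Finset.range k).sup fun j => X j ω : ℕ) : ℝ)}).toReal)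
      Filter.atTop (nhds 0) := by
  have hg : Filter.Tendsto (fun k : ℕ => 1 / (ε * Real.log k)) Filter.atTop (nhds 0) := by
    have h1 : Filter.Tendsto (fun k : ℕ => ε * Real.log k) Filter.atTop Filter.atTop :=
      (Real.tendsto_log_atTop.comp tendsto_natCast_atTop_atTop).const_mul_atTop hε
    have h2 := h1.inv_tendsto_atTop
    refine h2.congr fun k => ?_
    simp [one_div]
  apply squeeze_zero' (Filter.Eventually.of_forall fun k => ENNReal.toReal_nonneg) _ hg
  filter_upwards [Filter.eventually_ge_atTop 2] with k hk
  have hk0 : (0 : ℝ) < k := by positivity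
  have hlogk : 0 < Real.log k := Real.log_pos (by exact_mod_cast hk)
  set t : ℝ := ε * (k * Real.log k) with ht
  have ht0 : 0 < t := by positivity
  set m : ℕ := ⌊t⌋₊ with hm
  have hsetsub : {ω : Ω | t < (((Finset.range k).sup fun j => X j ω : ℕ) : ℝ)}
      ⊆ ⋃ j ∈ Finset.range k, {ω | m < X j ω} := by
    intro ω hω
    simp only [Set.mem_setOf_eq] at hω
    have : m < (Finset.range k).sup fun j => X j ω := (Nat.floor_lt ht0.le).mpr hω
    rw [Finset.lt_sup_iff] at this
    obtain ⟨j, hj, hjlt⟩ := this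
    exact Set.mem_biUnion hj hjlt
  have hbound : μ {ω : Ω | t < (((Finset.range k).sup fun j => X j ω : ℕ) : ℝ)}
      ≤ (k : ℝ≥0∞) * ENNReal.ofReal (1 / (m + 1)) := by
    calc μ _ ≤ μ (⋃ j ∈ Finset.range k, {ω | m < X j ω}) := measure_mono hsetsub
    _ ≤ ∑ j ∈ Finset.range k, μ {ω | m < X j ω} := measure_biUnion_finset_le _ _
    _ ≤ ∑ _j ∈ Finset.range k, ENNReal.ofReal (1 / (m + 1)) :=
        Finset.sum_le_sum fun j _ => luroth_tail μ (X j) (hmeas j) (hdist j) m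
    _ = (k : ℝ≥0∞) * ENNReal.ofReal (1 / (m + 1)) := by
        simp [Finset.sum_const, mul_comm]
  have hRfin : ((k : ℝ≥0∞) * ENNReal.ofReal (1 / (m + 1))) ≠ ⊤ := by
    exact ENNReal.mul_ne_top (by simp) ENNReal.ofReal_ne_top
  have htoReal := ENNReal.toReal_mono hRfin hbound
  have heval : ((k : ℝ≥0∞) * ENNReal.ofReal (1 / (m + 1))).toReal
      = (k : ℝ) * (1 / (m + 1)) := by
    rw [ENNReal.toReal_mul, ENNReal.toReal_ofReal (by positivity)]
    simp
  rw [heval] at htoReal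
  have hstep : (k : ℝ) * (1 / (m + 1)) ≤ 1 / (ε * Real.log k) := by
    have hmt : t ≤ (m : ℝ) + 1 := (Nat.lt_floor_add_one t).le
    have h1 : (k : ℝ) * (1 / (m + 1)) = k / (m + 1) := by ring
    have h2 : (k : ℝ) / (m + 1) ≤ k / t :=
      div_le_div_of_nonneg_left hk0.le ht0 hmt
    have h3 : (k : ℝ) / t = 1 / (ε * Real.log k) := by
      rw [ht]
      field_simp
    rw [h1]
    rw [h3] at h2
    exact h2
  exact le_trans htoReal hstep
end

section
/- Let X_1, X_2, … be an IID sequence of random variables with the Luroth distribution and S_k = X_1 + … + X_k. Then S_k/(k log k) converges to 1 in probability: for every ε > 0, lim_{k → ∞} P(|S_k/(k log k) − 1| > ε) = 0. -/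
open MeasureTheory ProbabilityTheory Filter Finset

lemma luroth_sum_range (j : ℕ) :
    ∑ n ∈ Finset.range j, (1:ℝ)/((n+1)*(n+2)) = 1 - 1/(j+1) := by
  induction j with
  | zero => simp
  | succ j ih =>
    rw [Finset.sum_range_succ, ih]
    have h1 : ((j:ℝ)+1) ≠ 0 := by positivity
    have h2 : ((j:ℝ)+2) ≠ 0 := by positivity
    push_cast
    field_simp
    ring

lemma luroth_hasSum : HasSum (fun n : ℕ => (1:ℝ)/((n+1)*(n+2))) 1 := by
  rw [hasSum_iff_tendsto_nat_of_nonneg (fun n => by positivity)]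
  simp_rw [luroth_sum_range]
  have h := tendsto_one_div_add_atTop_nhds_zero_nat (𝕜 := ℝ)
  have h2 : Tendsto (fun n : ℕ => 1 - 1 / ((n:ℝ) + 1)) atTop (nhds (1 - 0)) :=
    (tendsto_const_nhds).sub h
  simpa using h2

lemma min_cast_eq_sum (n m : ℕ) :
    ((min n m : ℕ) : ℝ) = ∑ j ∈ Finset.Icc 1 m, (if j ≤ n then (1:ℝ) else 0) := by
  induction m with
  | zero => simp
  | succ m ih =>
    rw [Finset.sum_Icc_succ_top (by omega : 1 ≤ m+1), ← ih]
    rcases le_or_gt (m+1) n with h|h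
    · rw [if_pos h, min_eq_right h, min_eq_right (by omega : m ≤ n)]
      push_cast; ring
    · rw [if_neg (by omega), min_eq_left (by omega : n ≤ m+1), min_eq_left (by omega : n ≤ m)]
      ring

lemma min_sq_cast_eq_sum (n m : ℕ) :
    (((min n m : ℕ) : ℝ))^2
      = ∑ j ∈ Finset.Icc 1 m, (2*(j:ℝ)-1) * (if j ≤ n then (1:ℝ) else 0) := by
  induction m with
  | zero => simp
  | succ m ih =>
    rw [Finset.sum_Icc_succ_top (by omega : 1 ≤ m+1), ← ih]
    rcases le_or_gt (m+1) n with h|h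
    · rw [if_pos h, min_eq_right h, min_eq_right (by omega : m ≤ n)]
      push_cast; ring
    · rw [if_neg (by omega), min_eq_left (by omega : n ≤ m+1), min_eq_left (by omega : n ≤ m)]
      ring

section aux
variable {Ω : Type*} [MeasurableSpace Ω] (μ : Measure Ω) [IsProbabilityMeasure μ]

lemma luroth_zero (X0 : Ω → ℕ) (hm : Measurable X0)
    (hd : ∀ n : ℕ, 1 ≤ n → μ {ω | X0 ω = n} = ENNReal.ofReal (1 / (n * (n + 1)))) :
    μ {ω | X0 ω = 0} = 0 := by
  have hdisj : Pairwise (Function.onFun Disjoint (fun n => {ω | X0 ω = n})) := by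
    intro a b hab
    apply Set.disjoint_left.mpr
    intro ω h1 h2
    exact hab (h1.symm.trans h2)
  have hms : ∀ n : ℕ, MeasurableSet {ω | X0 ω = n} := fun n =>
    hm (measurableSet_singleton n)
  have hcover : (⋃ n, {ω | X0 ω = n}) = Set.univ := by
    ext ω; simp
  have htot : ∑' n, μ {ω | X0 ω = n} = 1 := by
    rw [← measure_iUnion hdisj hms, hcover, measure_univ]
  rw [tsum_eq_zero_add' ENNReal.summable] at htot
  have htail : ∑' n : ℕ, μ {ω | X0 ω = n + 1} = 1 := by
    have h1 : ∀ n : ℕ, μ {ω | X0 ω = n + 1}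
        = ENNReal.ofReal ((1:ℝ)/((n+1)*(n+2))) := by
      intro n
      rw [hd (n+1) (by omega)]
      congr 1
      push_cast
      ring_nf
    simp_rw [h1]
    rw [← ENNReal.ofReal_tsum_of_nonneg (fun n => by positivity) luroth_hasSum.summable,
      luroth_hasSum.tsum_eq, ENNReal.ofReal_one]
  rw [htail] at htot
  have h0 : μ {ω | X0 ω = 0} + 1 = 0 + 1 := by rw [htot, zero_add]
  exact (ENNReal.add_left_inj ENNReal.one_ne_top).mp h0

lemma luroth_ge (X0 : Ω → ℕ) (hm : Measurable X0)
    (hd : ∀ n : ℕ, 1 ≤ n → μ {ω | X0 ω = n} = ENNReal.ofReal (1 / (n * (n + 1))))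
    (j : ℕ) (hj : 1 ≤ j) :
    μ {ω | j ≤ X0 ω} = ENNReal.ofReal (1 / j) := by
  obtain ⟨jj, rfl⟩ : ∃ jj, j = jj + 1 := ⟨j - 1, by omega⟩
  have hlt : μ {ω | X0 ω < jj + 1} = ENNReal.ofReal (1 - 1/(jj+1)) := by
    have hdecomp : {ω | X0 ω < jj + 1} = ⋃ n ∈ Finset.range (jj+1), {ω | X0 ω = n} := by
      ext ω; simp [Nat.lt_succ_iff]
    rw [hdecomp, measure_biUnion_finset]
    · rw [Finset.sum_range_succ']
      rw [luroth_zero μ X0 hm hd, add_zero]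
      have h1 : ∀ n : ℕ, μ {ω | X0 ω = n + 1}
          = ENNReal.ofReal ((1:ℝ)/((n+1)*(n+2))) := by
        intro n
        rw [hd (n+1) (by omega)]
        congr 1
        push_cast
        ring_nf
      simp_rw [h1]
      rw [← ENNReal.ofReal_sum_of_nonneg (fun n _ => by positivity), luroth_sum_range]
    · intro a _ b _ hab
      apply Set.disjoint_left.mpr
      intro ω h1 h2
      exact hab (h1.symm.trans h2)
    · exact fun n _ => hm (measurableSet_singleton n)
  have hcompl : {ω | jj + 1 ≤ X0 ω} = {ω | X0 ω < jj + 1}ᶜ := by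
    ext ω; simp [Nat.lt_succ_iff]
  have hmslt : MeasurableSet {ω | X0 ω < jj + 1} := hm measurableSet_Iio
  rw [hcompl, prob_compl_eq_one_sub hmslt, hlt]
  have hnonneg : (0:ℝ) ≤ 1 - 1/(jj+1) := by
    have : (1:ℝ)/(jj+1) ≤ 1 := by
      rw [div_le_one (by positivity)]; norm_num
    linarith
  rw [← ENNReal.ofReal_one, ← ENNReal.ofReal_sub _ hnonneg]
  congr 1
  push_cast
  ring


lemma luroth_trunc_meas (X0 : Ω → ℕ) (hm : Measurable X0) (m : ℕ) :
    Measurable (fun ω => ((min (X0 ω) m : ℕ) : ℝ)) :=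
  (measurable_from_top (f := fun n : ℕ => ((min n m : ℕ) : ℝ))).comp hm

lemma luroth_trunc_memLp (X0 : Ω → ℕ) (hm : Measurable X0) (m : ℕ) :
    MemLp (fun ω => ((min (X0 ω) m : ℕ) : ℝ)) 2 μ := by
  apply MemLp.of_bound (luroth_trunc_meas X0 hm m).aestronglyMeasurable (m : ℝ)
  filter_upwards with ω
  rw [Real.norm_eq_abs, abs_of_nonneg (by positivity)]
  exact_mod_cast min_le_right (X0 ω) m

lemma luroth_trunc_int (X0 : Ω → ℕ) (hm : Measurable X0)
    (hd : ∀ n : ℕ, 1 ≤ n → μ {ω | X0 ω = n} = ENNReal.ofReal (1 / (n * (n + 1))))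
    (m : ℕ) :
    ∫ ω, ((min (X0 ω) m : ℕ) : ℝ) ∂μ = ∑ j ∈ Finset.Icc 1 m, (1:ℝ)/j := by
  have hrw : (fun ω => ((min (X0 ω) m : ℕ) : ℝ))
      = fun ω => ∑ j ∈ Finset.Icc 1 m,
          Set.indicator {ω' | j ≤ X0 ω'} (1 : Ω → ℝ) ω := by
    funext ω
    rw [min_cast_eq_sum]
    refine Finset.sum_congr rfl fun j _ => ?_
    simp [Set.indicator_apply]
  rw [hrw, integral_finset_sum]
  · refine Finset.sum_congr rfl fun j hj => ?_
    have hms : MeasurableSet {ω' | j ≤ X0 ω'} := hm measurableSet_Ici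
    rw [integral_indicator_one hms, Measure.real_def,
      luroth_ge μ X0 hm hd j (Finset.mem_Icc.mp hj).1,
      ENNReal.toReal_ofReal (by positivity)]
  · intro j _
    have hms : MeasurableSet {ω' | j ≤ X0 ω'} := hm measurableSet_Ici
    exact (integrable_const (1:ℝ)).indicator hms

lemma luroth_trunc_sq_int (X0 : Ω → ℕ) (hm : Measurable X0)
    (hd : ∀ n : ℕ, 1 ≤ n → μ {ω | X0 ω = n} = ENNReal.ofReal (1 / (n * (n + 1))))
    (m : ℕ) :
    ∫ ω, ((min (X0 ω) m : ℕ) : ℝ)^2 ∂μ ≤ 2*m := by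
  have hrw : (fun ω => ((min (X0 ω) m : ℕ) : ℝ)^2)
      = fun ω => ∑ j ∈ Finset.Icc 1 m,
          (2*(j:ℝ)-1) • Set.indicator {ω' | j ≤ X0 ω'} (1 : Ω → ℝ) ω := by
    funext ω
    rw [min_sq_cast_eq_sum]
    refine Finset.sum_congr rfl fun j _ => ?_
    simp [Set.indicator_apply, smul_eq_mul]
  rw [hrw, integral_finset_sum]
  · have hb : ∀ j ∈ Finset.Icc 1 m,
        ∫ ω, (2*(j:ℝ)-1) • Set.indicator {ω' | j ≤ X0 ω'} (1 : Ω → ℝ) ω ∂μ ≤ 2 := by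
      intro j hj
      have hj1 : 1 ≤ j := (Finset.mem_Icc.mp hj).1
      have hms : MeasurableSet {ω' | j ≤ X0 ω'} := hm measurableSet_Ici
      rw [integral_smul, integral_indicator_one hms, Measure.real_def,
        luroth_ge μ X0 hm hd j hj1, ENNReal.toReal_ofReal (by positivity),
        smul_eq_mul]
      have hjpos : (0:ℝ) < j := by exact_mod_cast hj1
      rw [mul_one_div, div_le_iff₀ hjpos]
      linarith
    calc ∑ j ∈ Finset.Icc 1 m, ∫ ω, (2*(j:ℝ)-1) • Set.indicator {ω' | j ≤ X0 ω'} (1 : Ω → ℝ) ω ∂μ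
        ≤ ∑ _j ∈ Finset.Icc 1 m, (2:ℝ) := Finset.sum_le_sum hb
      _ = 2*m := by simp [Nat.card_Icc]; ring
  · intro j _
    have hms : MeasurableSet {ω' | j ≤ X0 ω'} := hm measurableSet_Ici
    exact (((integrable_const (1:ℝ)).indicator hms).smul ((2:ℝ)*(j:ℝ)-1))
end aux

set_option maxHeartbeats 2000000 in
/-- For an IID sequence `X_1, X_2, …` with the Luroth distribution
`P(X = n) = 1/(n(n+1))` and `S_k = X_1 + ⋯ + X_k`, the normalized sum `S_k / (k log k)`
tends to `1` in probability: for every `ε > 0`, `P(|S_k/(k log k) - 1| > ε) → 0`. -/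
theorem sum_div_klogk_tendsto_one_in_probability
    {Ω : Type*} [MeasurableSpace Ω] (μ : Measure Ω) [IsProbabilityMeasure μ]
    (X : ℕ → Ω → ℕ) (hmeas : ∀ i, Measurable (X i))
    (hindep : iIndepFun X μ)
    (hdist : ∀ i, ∀ n : ℕ, 1 ≤ n →
      μ {ω | X i ω = n} = ENNReal.ofReal (1 / (n * (n + 1))))
    (ε : ℝ) (hε : 0 < ε) :
    Filter.Tendsto
      (fun k : ℕ =>
        (μ {ω | ε < |((∑ i ∈ Finset.range k, X i ω : ℕ) : ℝ)
            / (k * Real.log k) - 1|}).toReal)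
      Filter.atTop (nhds 0) := by
  have hε2 : 0 < ε/2 := by positivity
  have hlogT : Tendsto (fun k : ℕ => Real.log k) atTop atTop :=
    Real.tendsto_log_atTop.comp tendsto_natCast_atTop_atTop
  have hinv : Tendsto (fun k : ℕ => ((1:ℝ) + 8/ε^2) / Real.log k) atTop (nhds 0) :=
    Tendsto.div_atTop tendsto_const_nhds hlogT
  have hll : Tendsto (fun k : ℕ => (1 + Real.log (Real.log k)) / Real.log k)
      atTop (nhds 0) := by
    have h1 : Tendsto (fun k : ℕ => (1:ℝ) / Real.log k) atTop (nhds 0) :=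
      Tendsto.div_atTop tendsto_const_nhds hlogT
    have h2 : Tendsto (fun k : ℕ => Real.log (Real.log k) / Real.log k)
        atTop (nhds 0) := by
      have h3 := (Real.isLittleO_log_id_atTop.comp_tendsto hlogT).tendsto_div_nhds_zero
      simpa using h3
    have h4 := h1.add h2
    simpa [add_div] using h4
  have hev1 : ∀ᶠ k : ℕ in atTop,
      1 + Real.log (Real.log k) ≤ ε/2 * Real.log k := by
    filter_upwards [hll.eventually (gt_mem_nhds hε2), hlogT.eventually_ge_atTop 1]
      with k h1 h2
    have hlpos : (0:ℝ) < Real.log k := lt_of_lt_of_le one_pos h2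
    rw [div_lt_iff₀ hlpos] at h1
    linarith
  apply squeeze_zero' (Filter.Eventually.of_forall fun k => ENNReal.toReal_nonneg) ?_ hinv
  filter_upwards [hev1, hlogT.eventually_ge_atTop 1, eventually_ge_atTop 1]
    with k hev hlog1 hk1
  have hkR : (1:ℝ) ≤ k := by exact_mod_cast hk1
  have hkpos : (0:ℝ) < k := lt_of_lt_of_le one_pos hkR
  have hlpos : (0:ℝ) < Real.log k := lt_of_lt_of_le one_pos hlog1
  set Lk : ℝ := (k:ℝ) * Real.log (k:ℝ) with hLk
  have hLpos : 0 < Lk := by positivity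
  have hL1 : 1 ≤ Lk := by nlinarith
  set m := Nat.floor Lk with hm
  have hm1 : 1 ≤ m := Nat.le_floor (by exact_mod_cast hL1)
  have hmR1 : (1:ℝ) ≤ m := by exact_mod_cast hm1
  have hmle : (m:ℝ) ≤ Lk := Nat.floor_le hLpos.le
  have hmgt : Lk < m + 1 := Nat.lt_floor_add_one Lk
  clear_value Lk
  clear_value m
  obtain ⟨Y, hY⟩ : ∃ Y : ℕ → Ω → ℝ, Y = fun i ω => ((min (X i ω) m : ℕ) : ℝ) := ⟨_, rfl⟩
  have hYmeas : ∀ i, Measurable (Y i) := by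
    intro i; rw [hY]; exact luroth_trunc_meas (X i) (hmeas i) m
  have hYmem : ∀ i, MemLp (Y i) 2 μ := by
    intro i; rw [hY]; exact luroth_trunc_memLp μ (X i) (hmeas i) m
  obtain ⟨H, hH⟩ : ∃ H : ℝ, H = ∑ j ∈ Finset.Icc 1 m, (1:ℝ)/j := ⟨_, rfl⟩
  have hYint : ∀ i, ∫ ω, Y i ω ∂μ = H := by
    intro i; rw [hY, hH]; exact luroth_trunc_int μ (X i) (hmeas i) (hdist i) m
  obtain ⟨T, hT⟩ : ∃ T : Ω → ℝ, T = ∑ i ∈ Finset.range k, Y i := ⟨_, rfl⟩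
  have hTmem : MemLp T 2 μ := by
    rw [hT]; exact memLp_finset_sum' _ (fun i _ => hYmem i)
  have hET : μ[T] = k * H := by
    rw [hT]
    show (∫ ω, (∑ i ∈ Finset.range k, Y i) ω ∂μ) = _
    simp_rw [Finset.sum_apply]
    rw [integral_finset_sum _ (fun i _ => ((hYmem i).integrable one_le_two))]
    simp_rw [hYint]
    rw [Finset.sum_const, Finset.card_range, nsmul_eq_mul]
  have hYindep : iIndepFun Y μ := by
    rw [hY]
    exact hindep.comp (fun _ => fun n : ℕ => ((min n m : ℕ) : ℝ))
      (fun _ => measurable_from_top)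
  have hVar : variance T μ ≤ (k:ℝ) * (2*m) := by
    rw [hT, IndepFun.variance_sum (fun i _ => hYmem i)
      (fun i _ j _ hij => hYindep.indepFun hij)]
    calc ∑ i ∈ Finset.range k, variance (Y i) μ
        ≤ ∑ _i ∈ Finset.range k, (2*(m:ℝ)) := by
          apply Finset.sum_le_sum
          intro i _
          refine le_trans (variance_le_expectation_sq (hYmeas i).aestronglyMeasurable) ?_
          have h5 := luroth_trunc_sq_int μ (X i) (hmeas i) (hdist i) m
          simpa [hY] using h5
      _ = (k:ℝ)*(2*m) := by rw [Finset.sum_const, Finset.card_range, nsmul_eq_mul]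
  obtain ⟨c, hc⟩ : ∃ c : ℝ, c = ε/2 * Lk := ⟨_, rfl⟩
  have hcpos : 0 < c := by rw [hc]; positivity
  have hcheb := meas_ge_le_variance_div_sq (μ := μ) hTmem hcpos
  -- union bound
  have hA : μ (⋃ i ∈ Finset.range k, {ω | m+1 ≤ X i ω})
      ≤ ENNReal.ofReal ((k:ℝ) * (1/((m:ℝ)+1))) := by
    calc μ (⋃ i ∈ Finset.range k, {ω | m+1 ≤ X i ω})
        ≤ ∑ i ∈ Finset.range k, μ {ω | m+1 ≤ X i ω} :=
          measure_biUnion_finset_le _ _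
      _ = ∑ _i ∈ Finset.range k, ENNReal.ofReal (1/((m:ℝ)+1)) := by
          refine Finset.sum_congr rfl fun i _ => ?_
          rw [luroth_ge μ (X i) (hmeas i) (hdist i) (m+1) (by omega)]
          congr 1
          push_cast
          ring
      _ = (k:ℕ) * ENNReal.ofReal (1/((m:ℝ)+1)) := by
          simp [Finset.card_range]
      _ = ENNReal.ofReal ((k:ℝ) * (1/((m:ℝ)+1))) := by
          rw [ENNReal.ofReal_mul (by positivity), ENNReal.ofReal_natCast]
  -- expectation control
  have hHharm : H = (harmonic m : ℝ) := by
    rw [hH, harmonic_eq_sum_Icc]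
    push_cast
    simp [one_div]
  have hloglog : (0:ℝ) ≤ Real.log (Real.log k) := Real.log_nonneg hlog1
  have hlogLk : Real.log Lk = Real.log k + Real.log (Real.log k) := by
    rw [hLk, Real.log_mul (ne_of_gt hkpos) (ne_of_gt hlpos)]
  have hHlow : Real.log k ≤ H := by
    rw [hHharm]
    refine le_trans ?_ (log_add_one_le_harmonic m)
    have hkm : (k:ℝ) ≤ (m:ℝ)+1 := by nlinarith
    have := Real.log_le_log hkpos (by push_cast; linarith : (k:ℝ) ≤ ((m+1 : ℕ):ℝ))
    exact this
  have hHhigh : H ≤ 1 + Real.log (Real.log k) + Real.log k := by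
    rw [hHharm]
    refine le_trans (harmonic_le_one_add_log m) ?_
    have h6 : Real.log m ≤ Real.log Lk :=
      Real.log_le_log (by linarith) hmle
    rw [hlogLk] at h6
    linarith
  have hEC : |(k:ℝ) * H - Lk| ≤ ε/2 * Lk := by
    have h7 : (k:ℝ)*H - Lk = (k:ℝ)*(H - Real.log k) := by rw [hLk]; ring
    rw [h7, abs_of_nonneg (by nlinarith)]
    have h8 : H - Real.log k ≤ ε/2 * Real.log k := by linarith
    calc (k:ℝ)*(H - Real.log k) ≤ (k:ℝ)*(ε/2*Real.log k) := by nlinarith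
      _ = ε/2 * Lk := by rw [hLk]; ring
  -- event inclusion
  have hsub : {ω | ε < |((∑ i ∈ Finset.range k, X i ω : ℕ) : ℝ) / Lk - 1|}
      ⊆ (⋃ i ∈ Finset.range k, {ω | m+1 ≤ X i ω}) ∪ {ω | c ≤ |T ω - μ[T]|} := by
    intro ω hω
    by_contra hcon
    rw [Set.mem_union] at hcon
    push_neg at hcon
    obtain ⟨hA', hB'⟩ := hcon
    simp only [Set.mem_iUnion, Set.mem_setOf_eq, not_exists, not_le] at hA' hB'
    have hTS : T ω = ((∑ i ∈ Finset.range k, X i ω : ℕ) : ℝ) := by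
      rw [hT, Finset.sum_apply]
      push_cast
      refine Finset.sum_congr rfl fun i hi => ?_
      have hXle : X i ω ≤ m := Nat.lt_succ_iff.mp (hA' i hi)
      simp only [hY]
      rw [min_eq_left hXle]
    rw [Set.mem_setOf_eq] at hω
    have hdist2 : |T ω - μ[T]| < c := hB'
    have habs : |((∑ i ∈ Finset.range k, X i ω : ℕ) : ℝ) - Lk| < ε * Lk := by
      calc |((∑ i ∈ Finset.range k, X i ω : ℕ) : ℝ) - Lk|
          = |(T ω - μ[T]) + ((k:ℝ)*H - Lk)| := by rw [hTS, hET]; ring_nf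
        _ ≤ |T ω - μ[T]| + |(k:ℝ)*H - Lk| := abs_add_le _ _
        _ < c + ε/2*Lk := by
            exact add_lt_add_of_lt_of_le hdist2 hEC
        _ = ε * Lk := by rw [hc]; ring
    have hS : |((∑ i ∈ Finset.range k, X i ω : ℕ) : ℝ) / Lk - 1| < ε := by
      have h9 : ((∑ i ∈ Finset.range k, X i ω : ℕ) : ℝ) / Lk - 1
          = (((∑ i ∈ Finset.range k, X i ω : ℕ) : ℝ) - Lk) / Lk := by
        field_simp
      rw [h9, abs_div, abs_of_pos hLpos, div_lt_iff₀ hLpos]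
      linarith [habs]
    linarith [hω, hS]
  -- final bound
  have hmain : μ {ω | ε < |((∑ i ∈ Finset.range k, X i ω : ℕ) : ℝ) / Lk - 1|}
      ≤ ENNReal.ofReal ((1 + 8/ε^2) / Real.log k) := by
    have hvc : 0 ≤ variance T μ / c^2 :=
      div_nonneg (variance_nonneg _ _) (sq_nonneg _)
    calc μ {ω | ε < |((∑ i ∈ Finset.range k, X i ω : ℕ) : ℝ) / Lk - 1|}
        ≤ μ ((⋃ i ∈ Finset.range k, {ω | m+1 ≤ X i ω}) ∪ {ω | c ≤ |T ω - μ[T]|}) :=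
          measure_mono hsub
      _ ≤ μ (⋃ i ∈ Finset.range k, {ω | m+1 ≤ X i ω}) + μ {ω | c ≤ |T ω - μ[T]|} :=
          measure_union_le _ _
      _ ≤ ENNReal.ofReal ((k:ℝ) * (1/((m:ℝ)+1)))
            + ENNReal.ofReal (variance T μ / c^2) := add_le_add hA hcheb
      _ = ENNReal.ofReal ((k:ℝ) * (1/((m:ℝ)+1)) + variance T μ / c^2) :=
          (ENNReal.ofReal_add (by positivity) hvc).symm
      _ ≤ ENNReal.ofReal ((1 + 8/ε^2) / Real.log k) := by
          apply ENNReal.ofReal_le_ofReal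
          have hklog : (k:ℝ)/Lk = 1/Real.log k := by
            rw [hLk]; field_simp
          have h1 : (k:ℝ)*(1/((m:ℝ)+1)) ≤ 1/Real.log k := by
            rw [mul_one_div, ← hklog]
            apply div_le_div_of_nonneg_left (by positivity) hLpos
            linarith
          have h2 : variance T μ / c^2 ≤ 8/(ε^2 * Real.log k) := by
            rw [div_le_iff₀ (pow_pos hcpos 2)]
            have heq : 8/(ε^2*Real.log k)*c^2 = 2*(k:ℝ)*Lk := by
              rw [hc, hLk]
              field_simp
              ring
            calc variance T μ ≤ (k:ℝ)*(2*m) := hVar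
              _ = 2*(k:ℝ)*(m:ℝ) := by ring
              _ ≤ 2*(k:ℝ)*Lk := mul_le_mul_of_nonneg_left hmle (by positivity)
              _ = 8/(ε^2*Real.log k)*c^2 := heq.symm
          have h3 : 1/Real.log k + 8/(ε^2*Real.log k) = (1+8/ε^2)/Real.log k := by
            field_simp
          linarith
  exact ENNReal.toReal_le_of_le_ofReal
    (div_nonneg (by positivity) hlpos.le) hmain
end

section
/- Let B : [0, ∞) → [1, ∞) be the inverse of the strictly increasing function A(y) = y log y on [1, ∞), i.e., B(x) is the unique y ≥ 1 with y log y = x for x ≥ 0. Then the series Σ_{n=2}^{∞} (1/n²) · (B(n)² − B(n−1)²) converges (to a finite value). -/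
/-- Let `B : [0, ∞) → [1, ∞)` be the inverse of `y ↦ y log y` on `[1, ∞)`, i.e. for
`x ≥ 0`, `B x` is the unique `y ≥ 1` with `y log y = x`. Then the series
`∑_{n=2}^∞ (1/n²) (B(n)² - B(n-1)²)` converges. -/
theorem summable_J2 (B : ℝ → ℝ)
    (hB : ∀ x : ℝ, 0 ≤ x → 1 ≤ B x ∧ B x * Real.log (B x) = x) :
    Summable (fun n : ℕ =>
      (1 / ((n : ℝ) + 2) ^ 2) * ((B ((n : ℝ) + 2)) ^ 2 - (B ((n : ℝ) + 1)) ^ 2)) := by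
  -- B x > 1 for x > 0
  have hgt : ∀ x : ℝ, 0 < x → 1 < B x := by
    intro x hx
    obtain ⟨h1, h2⟩ := hB x hx.le
    rcases lt_or_eq_of_le h1 with h | h
    · exact h
    · exfalso; rw [← h] at h2; simp [Real.log_one] at h2; linarith
  -- monotonicity of B on nonneg reals
  have hmono : ∀ x y : ℝ, 0 ≤ x → x ≤ y → B x ≤ B y := by
    intro x y hx hxy
    by_contra h
    push_neg at h
    obtain ⟨h1x, h2x⟩ := hB x hx
    obtain ⟨h1y, h2y⟩ := hB y (hx.trans hxy)
    have hlog : Real.log (B y) ≤ Real.log (B x) :=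
      Real.log_le_log (by linarith) h.le
    have hly : 0 ≤ Real.log (B y) := Real.log_nonneg h1y
    rcases hly.lt_or_eq with hly' | hly'
    · have : B y * Real.log (B y) < B x * Real.log (B x) := by nlinarith
      linarith
    · have hy0 : y = 0 := by rw [← h2y, ← hly']; ring
      have hx0 : x = 0 := le_antisymm (hxy.trans hy0.le) hx
      have hbx1 : 1 < B x := by linarith
      have : 0 < B x * Real.log (B x) := by
        have := Real.log_pos hbx1
        positivity
      rw [h2x, hx0] at this
      exact lt_irrefl _ this
  set g : ℕ → ℝ := fun n => 2 / Real.log (B ((n : ℝ) + 1)) with hg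
  have key : ∀ n : ℕ,
      (1 / ((n : ℝ) + 2) ^ 2) * ((B ((n : ℝ) + 2)) ^ 2 - (B ((n : ℝ) + 1)) ^ 2)
        ≤ g n - g (n + 1) := by
    intro n
    set b := B ((n : ℝ) + 1) with hbdef
    set c := B ((n : ℝ) + 2) with hcdef
    have hb1 : 1 < b := hgt _ (by positivity)
    have hc1 : 1 < c := hgt _ (by positivity)
    have hbc : b ≤ c := hmono _ _ (by positivity) (by linarith)
    have hceq : c * Real.log c = (n : ℝ) + 2 := (hB _ (by positivity)).2
    set L := Real.log b with hL
    set M := Real.log c with hM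
    have hL0 : 0 < L := Real.log_pos hb1
    have hM0 : 0 < M := Real.log_pos hc1
    have hLM : L ≤ M := Real.log_le_log (by linarith) hbc
    -- log (b/c) ≤ b/c - 1, giving c - b ≤ c * (M - L)
    have hsub : c - b ≤ c * (M - L) := by
      have h1 : Real.log (b / c) ≤ b / c - 1 :=
        Real.log_le_sub_one_of_pos (by positivity)
      rw [Real.log_div (by linarith) (by linarith)] at h1
      have hcpos : (0 : ℝ) < c := by linarith
      have h2 := mul_le_mul_of_nonneg_left h1 hcpos.le
      have h3 : c * (b / c - 1) = b - c := by field_simp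
      rw [h3] at h2
      nlinarith
    have hgn1 : g (n + 1) = 2 / M := by
      simp only [hg]
      push_cast
      have harg : ((n : ℝ) + 1) + 1 = (n : ℝ) + 2 := by ring
      rw [harg]
    have hgn : g n = 2 / L := by
      simp only [hg, ← hL, hbdef]
      rfl
    rw [hgn, hgn1]
    have hc2 : ((n : ℝ) + 2) ^ 2 = (c * M) ^ 2 := by rw [hceq]
    rw [hc2]
    rw [div_sub_div _ _ (ne_of_gt hL0) (ne_of_gt hM0)]
    rw [one_div, ← div_eq_inv_mul]
    rw [div_le_div_iff₀ (by positivity) (by positivity)]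
    -- (c² - b²)(L M) ≤ (2M - 2L)(cM)²
    have h1 : c ^ 2 - b ^ 2 ≤ 2 * c ^ 2 * (M - L) := by nlinarith
    nlinarith [mul_le_mul_of_nonneg_right h1 (mul_pos hL0 hM0).le,
      mul_le_mul_of_nonneg_right hLM
        (mul_nonneg (mul_nonneg (by positivity) (by linarith)) hM0.le :
          (0:ℝ) ≤ 2 * c ^ 2 * (M - L) * M),
      sq_nonneg (c * M)]
  have hnonneg : ∀ n : ℕ,
      0 ≤ (1 / ((n : ℝ) + 2) ^ 2) * ((B ((n : ℝ) + 2)) ^ 2 - (B ((n : ℝ) + 1)) ^ 2) := by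
    intro n
    have hb1 : 1 ≤ B ((n : ℝ) + 1) := (hB _ (by positivity)).1
    have hbc : B ((n : ℝ) + 1) ≤ B ((n : ℝ) + 2) := hmono _ _ (by positivity) (by linarith)
    have : (B ((n : ℝ) + 1)) ^ 2 ≤ (B ((n : ℝ) + 2)) ^ 2 := by nlinarith
    have h2 : (0 : ℝ) < 1 / ((n : ℝ) + 2) ^ 2 := by positivity
    nlinarith
  apply summable_of_sum_range_le hnonneg (c := g 0)
  intro n
  calc ∑ i ∈ Finset.range n,
        (1 / ((i : ℝ) + 2) ^ 2) * ((B ((i : ℝ) + 2)) ^ 2 - (B ((i : ℝ) + 1)) ^ 2)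
      ≤ ∑ i ∈ Finset.range n, (g i - g (i + 1)) := Finset.sum_le_sum fun i _ => key i
    _ = g 0 - g n := Finset.sum_range_sub' g n
    _ ≤ g 0 := by
        have : 0 ≤ g n := by
          have := Real.log_pos (hgt ((n : ℝ) + 1) (by positivity))
          simp only [hg]
          positivity
        linarith
end
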